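/- arXiv:1006.2926 — 2 statements merged into one kernel-verified Lean document; each statement's English description precedes it below -/
import Mathlib

section
/- Let k ≥ 2 be an integer, let 0 ≤ α ≤ 1 be a real, and let d > 0 be a constant. Let R be a finite family of n regions (subsets) of ℝ² such that for every subfamily R' ⊆ R with m regions, the graph G_0(R') has at most (d/2)·m^{1+α} edges. Then the hypergraph H(R) induced by R admits a k-colorful coloring with at most 4·d·k·n^α + 1 colors; that is, c_{H(R)}(k) = O(k·n^α). -/
/-- The hyperedge of the hypergraph `H(R)` induced by the family of regions `R`
at the point `p`: the set of (indices of) regions containing `p`. -/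
def hyperedge {ι X : Type} (R : ι → Set X) (p : X) : Set ι := {i | p ∈ R i}

/-- The graph `G_k(R')` for the subfamily `R' = {R i : i ∈ V}` of the family of
planar regions `R`: two distinct regions `r, s ∈ V` are adjacent iff some point
`p ∈ r ∩ s` is contained in at most `k` regions of `R' \ {r, s}`. -/
def GkOn {ι : Type} (k : ℕ) (R : ι → Set (ℝ × ℝ)) (V : Set ι) : SimpleGraph ι where
  Adj r s := r ≠ s ∧ r ∈ V ∧ s ∈ V ∧
    ∃ p, p ∈ R r ∧ p ∈ R s ∧ ({t | t ∈ V ∧ t ≠ r ∧ t ≠ s ∧ p ∈ R t}).ncard ≤ k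
  symm := by
    constructor
    rintro r s ⟨hne, hrV, hsV, p, hr, hs, hcard⟩
    refine ⟨hne.symm, hsV, hrV, p, hs, hr, ?_⟩
    have hset : {t | t ∈ V ∧ t ≠ s ∧ t ≠ r ∧ p ∈ R t}
        = {t | t ∈ V ∧ t ≠ r ∧ t ≠ s ∧ p ∈ R t} := by
      ext t; simp only [Set.mem_setOf_eq]; tauto
    rw [hset]; exact hcard
  loopless := by constructor; rintro r ⟨hne, -⟩; exact hne rfl

open Finset in
lemma sum_pow_weights {ι : Type} [DecidableEq ι] (A : Finset ι) (p : ℝ) :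
    ∑ W ∈ A.powerset, p ^ W.card * (1 - p) ^ (A.card - W.card) = 1 := by
  classical
  induction A using Finset.induction with
  | empty => simp
  | insert a A ha ih =>
    rw [Finset.sum_powerset_insert ha]
    have h1 : ∀ W ∈ A.powerset,
        p ^ W.card * (1 - p) ^ ((insert a A).card - W.card)
          = (1 - p) * (p ^ W.card * (1 - p) ^ (A.card - W.card)) := by
      intro W hW
      have hWle := Finset.card_le_card (Finset.mem_powerset.mp hW)
      rw [Finset.card_insert_of_notMem ha]
      have : A.card + 1 - W.card = (A.card - W.card) + 1 := by omega
      rw [this, pow_succ]; ring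
    have h2 : ∀ W ∈ A.powerset,
        p ^ (insert a W).card * (1 - p) ^ ((insert a A).card - (insert a W).card)
          = p * (p ^ W.card * (1 - p) ^ (A.card - W.card)) := by
      intro W hW
      have hWA := Finset.mem_powerset.mp hW
      have haW : a ∉ W := fun h => ha (hWA h)
      have hWle := Finset.card_le_card hWA
      rw [Finset.card_insert_of_notMem ha, Finset.card_insert_of_notMem haW]
      have : A.card + 1 - (W.card + 1) = A.card - W.card := by omega
      rw [this, pow_succ]; ring
    rw [Finset.sum_congr rfl h1, Finset.sum_congr rfl h2, ← Finset.mul_sum, ← Finset.mul_sum, ih]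
    ring

lemma sum_weights_card {ι : Type} [DecidableEq ι] (V : Finset ι) (p : ℝ) :
    ∑ U ∈ V.powerset, p ^ U.card * (1 - p) ^ (V.card - U.card) * U.card
      = p * V.card := by
  classical
  induction V using Finset.induction with
  | empty => simp
  | insert a V ha ih =>
    rw [Finset.sum_powerset_insert ha]
    have h1 : ∀ W ∈ V.powerset,
        p ^ W.card * (1 - p) ^ ((insert a V).card - W.card) * W.card
          = (1 - p) * (p ^ W.card * (1 - p) ^ (V.card - W.card) * W.card) := by
      intro W hW
      have hWle := Finset.card_le_card (Finset.mem_powerset.mp hW)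
      rw [Finset.card_insert_of_notMem ha]
      have : V.card + 1 - W.card = (V.card - W.card) + 1 := by omega
      rw [this, pow_succ]; ring
    have h2 : ∀ W ∈ V.powerset,
        p ^ (insert a W).card * (1 - p) ^ ((insert a V).card - (insert a W).card) * (insert a W).card
          = p * (p ^ W.card * (1 - p) ^ (V.card - W.card) * W.card)
            + p * (p ^ W.card * (1 - p) ^ (V.card - W.card)) := by
      intro W hW
      have hWV := Finset.mem_powerset.mp hW
      have haW : a ∉ W := fun h => ha (hWV h)
      have hWle := Finset.card_le_card hWV
      rw [Finset.card_insert_of_notMem ha, Finset.card_insert_of_notMem haW]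
      have : V.card + 1 - (W.card + 1) = V.card - W.card := by omega
      rw [this, pow_succ]
      push_cast
      ring
    rw [Finset.sum_congr rfl h1, Finset.sum_congr rfl h2, Finset.sum_add_distrib,
      ← Finset.mul_sum, ← Finset.mul_sum, ← Finset.mul_sum, ih, sum_pow_weights,
      Finset.card_insert_of_notMem ha]
    push_cast
    ring

open scoped Classical in
lemma per_edge {ι : Type} [DecidableEq ι] (K : ℕ) (R : ι → Set (ℝ × ℝ)) (V : Finset ι)
    (p : ℝ) (hp0 : 0 ≤ p) (hp1 : p ≤ 1) (r s : ι)
    (hadj : (GkOn K R ↑V).Adj r s) :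
    p ^ 2 * (1 - p) ^ K ≤ ∑ U ∈ V.powerset,
      p ^ U.card * (1 - p) ^ (V.card - U.card) *
        (if s(r, s) ∈ (GkOn 0 R ↑U).edgeSet then (1:ℝ) else 0) := by
  classical
  obtain ⟨hne, hrV, hsV, q, hqr, hqs, hT⟩ := hadj
  rw [Finset.mem_coe] at hrV hsV
  set Tset : Set ι := {t | t ∈ (↑V : Set ι) ∧ t ≠ r ∧ t ≠ s ∧ q ∈ R t} with hTset
  have hTfin : Tset.Finite := Set.Finite.subset (V.finite_toSet) (fun t ht => ht.1)
  set Tf : Finset ι := hTfin.toFinset with hTf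
  have hTfcard : Tf.card ≤ K := by
    rw [← Set.ncard_coe_finset]
    rw [Set.Finite.coe_toFinset]
    exact hT
  set A : Finset ι := ((V.erase s).erase r) \ Tf with hA
  have hrA : r ∉ A := by simp [hA]
  have hsA : s ∉ A := by simp [hA]
  have hAV : A ⊆ V := fun t ht => by
    have := (Finset.mem_sdiff.mp ht).1
    exact Finset.mem_of_mem_erase (Finset.mem_of_mem_erase this)
  have hAcard : V.card - A.card - 2 ≤ K := by
    have h1 : ((V.erase s).erase r).card = V.card - 2 := by
      rw [Finset.card_erase_of_mem, Finset.card_erase_of_mem hsV]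
      · omega
      · exact Finset.mem_erase.mpr ⟨hne, hrV⟩
    have h2 := Finset.le_card_sdiff Tf ((V.erase s).erase r)
    rw [h1] at h2
    have h3 : A.card ≤ V.card := Finset.card_le_card hAV
    rw [hA] at *
    omega
  have hcard2 : 2 ≤ V.card := by
    have : ({r, s} : Finset ι) ⊆ V := by
      intro t ht; rcases Finset.mem_insert.mp ht with h | h
      · exact h ▸ hrV
      · rw [Finset.mem_singleton.mp h]; exact hsV
    calc 2 = ({r, s} : Finset ι).card := by rw [Finset.card_insert_of_notMem (by simpa), Finset.card_singleton]
    _ ≤ V.card := Finset.card_le_card this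
  -- the injection
  set g : Finset ι → Finset ι := fun W => insert r (insert s W) with hg
  have hgmem : ∀ W ∈ A.powerset, g W ∈ V.powerset := by
    intro W hW
    rw [Finset.mem_powerset] at hW ⊢
    intro t ht
    rcases Finset.mem_insert.mp ht with h | h
    · exact h ▸ hrV
    rcases Finset.mem_insert.mp h with h' | h'
    · exact h' ▸ hsV
    · exact hAV (hW h')
  have hgcard : ∀ W ∈ A.powerset, (g W).card = W.card + 2 := by
    intro W hW
    rw [Finset.mem_powerset] at hW
    have hsW : s ∉ W := fun h => hsA (hW h)
    have hrW : r ∉ insert s W := by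
      simp only [Finset.mem_insert]
      rintro (h | h)
      · exact hne h
      · exact hrA (hW h)
    rw [hg]
    simp only []
    rw [Finset.card_insert_of_notMem hrW, Finset.card_insert_of_notMem hsW]
  have hgedge : ∀ W ∈ A.powerset, s(r, s) ∈ (GkOn 0 R ↑(g W)).edgeSet := by
    intro W hW
    rw [Finset.mem_powerset] at hW
    rw [SimpleGraph.mem_edgeSet]
    refine ⟨hne, by simp [hg], by simp [hg], q, hqr, hqs, ?_⟩
    have : {t | t ∈ (↑(g W) : Set ι) ∧ t ≠ r ∧ t ≠ s ∧ q ∈ R t} = ∅ := by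
      ext t
      simp only [Set.mem_setOf_eq, Set.mem_empty_iff_false, iff_false, not_and]
      intro htg htr hts hqt
      rw [Finset.mem_coe, hg] at htg
      simp only [Finset.mem_insert] at htg
      rcases htg with h | h | h
      · exact htr h
      · exact hts h
      have htA := hW h
      have : t ∈ Tf := by
        rw [hTf, Set.Finite.mem_toFinset]
        exact ⟨Finset.mem_coe.mpr (hAV htA), htr, hts, hqt⟩
      exact (Finset.mem_sdiff.mp htA).2 this
    rw [this, Set.ncard_empty]
  have hginj : ∀ W₁ ∈ A.powerset, ∀ W₂ ∈ A.powerset, g W₁ = g W₂ → W₁ = W₂ := by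
    intro W₁ h₁ W₂ h₂ heq
    rw [Finset.mem_powerset] at h₁ h₂
    have key : ∀ W, W ⊆ A → ((g W).erase r).erase s = W := by
      intro W hWA
      have hsW : s ∉ W := fun h => hsA (hWA h)
      have hrW : r ∉ insert s W := by
        simp only [Finset.mem_insert]
        rintro (h | h)
        · exact hne h
        · exact hrA (hWA h)
      rw [hg]
      simp only []
      rw [Finset.erase_insert hrW, Finset.erase_insert hsW]
    rw [← key W₁ h₁, ← key W₂ h₂, heq]
  -- sum over image
  have himage : ∑ U ∈ (A.powerset).image g,
      p ^ U.card * (1 - p) ^ (V.card - U.card) *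
        (if s(r, s) ∈ (GkOn 0 R ↑U).edgeSet then (1:ℝ) else 0)
      = ∑ W ∈ A.powerset, p ^ (W.card + 2) * (1 - p) ^ (V.card - (W.card + 2)) := by
    rw [Finset.sum_image hginj]
    apply Finset.sum_congr rfl
    intro W hW
    rw [if_pos (hgedge W hW), hgcard W hW, mul_one]
  have hsub : (A.powerset).image g ⊆ V.powerset := by
    intro U hU
    obtain ⟨W, hW, rfl⟩ := Finset.mem_image.mp hU
    exact hgmem W hW
  have hmono : ∑ U ∈ (A.powerset).image g,
      p ^ U.card * (1 - p) ^ (V.card - U.card) *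
        (if s(r, s) ∈ (GkOn 0 R ↑U).edgeSet then (1:ℝ) else 0)
      ≤ ∑ U ∈ V.powerset,
      p ^ U.card * (1 - p) ^ (V.card - U.card) *
        (if s(r, s) ∈ (GkOn 0 R ↑U).edgeSet then (1:ℝ) else 0) := by
    apply Finset.sum_le_sum_of_subset_of_nonneg hsub
    intro U _ _
    have h1p : (0:ℝ) ≤ 1 - p := by linarith
    positivity
  refine le_trans ?_ (himage ▸ hmono)
  -- now compute the lower bound
  have hAcard' : A.card + 2 ≤ V.card := by
    have h1 : A ⊆ (V.erase s).erase r := fun t ht => (Finset.mem_sdiff.mp ht).1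
    have h2 : ((V.erase s).erase r).card = V.card - 2 := by
      rw [Finset.card_erase_of_mem, Finset.card_erase_of_mem hsV]
      · omega
      · exact Finset.mem_erase.mpr ⟨hne, hrV⟩
    have := Finset.card_le_card h1
    omega
  have hterm : ∀ W ∈ A.powerset, p ^ (W.card + 2) * (1 - p) ^ (V.card - (W.card + 2))
      = (p ^ 2 * (1 - p) ^ (V.card - A.card - 2)) * (p ^ W.card * (1 - p) ^ (A.card - W.card)) := by
    intro W hW
    have hWA := Finset.card_le_card (Finset.mem_powerset.mp hW)
    have : V.card - (W.card + 2) = (A.card - W.card) + (V.card - A.card - 2) := by omega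
    rw [this, pow_add, pow_add]
    ring
  rw [Finset.sum_congr rfl hterm, ← Finset.mul_sum, sum_pow_weights, mul_one]
  have h1p : (0:ℝ) ≤ 1 - p := by linarith
  have : (1 - p) ^ K ≤ (1 - p) ^ (V.card - A.card - 2) :=
    pow_le_pow_of_le_one h1p (by linarith) hAcard
  have hp2 : (0:ℝ) ≤ p ^ 2 := sq_nonneg p
  nlinarith [this, hp2]

lemma const_ineq (k : ℕ) (hk : 2 ≤ k) :
    (1:ℝ) ≤ 4 * k * (1/((k:ℝ)-1)) * (1 - 1/((k:ℝ)-1)) ^ (k-2) := by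
  rcases eq_or_lt_of_le hk with h | h
  · subst h; norm_num
  · have hk3 : 3 ≤ k := h
    have hkr : (3:ℝ) ≤ (k:ℝ) := by exact_mod_cast h
    set p : ℝ := 1/((k:ℝ)-1) with hp
    have hk1 : (0:ℝ) < (k:ℝ) - 1 := by linarith
    have hk2 : (0:ℝ) < (k:ℝ) - 2 := by linarith
    have hb : 1 - p = ((k:ℝ)-2)/((k:ℝ)-1) := by rw [hp]; field_simp; ring
    have hbpos : 0 < 1 - p := by rw [hb]; positivity
    set X : ℝ := (1 - p) ^ (k-2) with hX
    set Y : ℝ := (((k:ℝ)-1)/((k:ℝ)-2)) ^ (k-2) with hY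
    have hXY : X * Y = 1 := by
      rw [hX, hY, ← mul_pow, hb]
      have : ((k:ℝ)-2)/((k:ℝ)-1) * (((k:ℝ)-1)/((k:ℝ)-2)) = 1 := by field_simp
      rw [this, one_pow]
    have h2 : ((k:ℝ)-1)/((k:ℝ)-2) ≤ Real.exp (1/((k:ℝ)-2)) := by
      have := Real.add_one_le_exp (1/((k:ℝ)-2))
      have heq : ((k:ℝ)-1)/((k:ℝ)-2) = 1/((k:ℝ)-2) + 1 := by field_simp; ring
      linarith [heq ▸ this]
    have h4 : Real.exp (1/((k:ℝ)-2)) ^ (k-2) = Real.exp 1 := by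
      rw [← Real.exp_nat_mul]
      congr 1
      have : ((k-2 : ℕ) : ℝ) = (k:ℝ) - 2 := by
        push_cast [Nat.cast_sub (by omega : 2 ≤ k)]; ring
      rw [this]; field_simp
    have h3 : Y ≤ Real.exp 1 := by
      rw [hY, ← h4]
      exact pow_le_pow_left₀ (by positivity) h2 _
    have hXpos : 0 < X := by rw [hX]; positivity
    have h6 : 1 ≤ X * Real.exp 1 := by
      calc 1 = X * Y := hXY.symm
      _ ≤ X * Real.exp 1 := mul_le_mul_of_nonneg_left h3 hXpos.le
    have he : Real.exp 1 < 2.7182818286 := Real.exp_one_lt_d9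
    have hepos : 0 < Real.exp 1 := Real.exp_pos 1
    -- goal: 1 ≤ 4k * p * X
    have hgoal : Real.exp 1 * ((k:ℝ) - 1) ≤ 4 * k := by nlinarith
    have hXe : 1/Real.exp 1 ≤ X := by
      rw [div_le_iff₀ hepos] at *
      linarith [h6]
    have hfin : (k:ℝ) - 1 ≤ 4*k*X := by
      nlinarith [mul_le_mul_of_nonneg_left h6 (show (0:ℝ) ≤ 4*(k:ℝ) by positivity), hgoal, hepos]
    have hrw : 4 * (k:ℝ) * p * X = 4*(k:ℝ)*X/((k:ℝ)-1) := by rw [hp]; field_simp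
    rw [hrw, le_div_iff₀ hk1, one_mul]
    exact hfin


open scoped Classical in
lemma edge_count {ι : Type} [Fintype ι] (k : ℕ) (hk : 2 ≤ k) (α d : ℝ)
    (hα0 : 0 ≤ α) (hd : 0 < d) (R : ι → Set (ℝ × ℝ))
    (hedges : ∀ V' : Finset ι,
      (((GkOn 0 R ↑V').edgeSet).ncard : ℝ) ≤ (d / 2) * (V'.card : ℝ) ^ (1 + α))
    (V : Finset ι) :
    (((GkOn (k-2) R ↑V).edgeSet).ncard : ℝ) ≤ 2 * d * k * (V.card : ℝ) ^ (1 + α) := by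
  classical
  set p : ℝ := 1/((k:ℝ)-1) with hp
  have hk1 : (1:ℝ) ≤ (k:ℝ) - 1 := by
    have : (2:ℝ) ≤ (k:ℝ) := by exact_mod_cast hk
    linarith
  have hp0 : 0 ≤ p := by rw [hp]; positivity
  have hp1 : p ≤ 1 := by rw [hp, div_le_one (by linarith)]; linarith
  have hppos : 0 < p := by rw [hp]; positivity
  set m : ℕ := V.card with hm
  have hEfin : ((GkOn (k-2) R ↑V).edgeSet).Finite := Set.toFinite _
  set Eh : Finset (Sym2 ι) := hEfin.toFinset with hEh
  have hEcard : ((GkOn (k-2) R ↑V).edgeSet).ncard = Eh.card :=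
    Set.ncard_eq_toFinset_card _ hEfin
  set w : Finset ι → ℝ := fun U => p ^ U.card * (1 - p) ^ (m - U.card) with hw
  have hwnn : ∀ U, 0 ≤ w U := by
    intro U; rw [hw]
    have : (0:ℝ) ≤ 1 - p := by linarith
    positivity
  -- the double sum
  set S : ℝ := ∑ U ∈ V.powerset, ∑ ε ∈ Eh,
      w U * (if ε ∈ (GkOn 0 R ↑U).edgeSet then (1:ℝ) else 0) with hS
  -- lower bound
  have hlow : (Eh.card : ℝ) * (p ^ 2 * (1 - p) ^ (k-2)) ≤ S := by
    rw [hS, Finset.sum_comm]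
    have : ∀ ε ∈ Eh, p ^ 2 * (1 - p) ^ (k-2)
        ≤ ∑ U ∈ V.powerset, w U * (if ε ∈ (GkOn 0 R ↑U).edgeSet then (1:ℝ) else 0) := by
      intro ε hε
      induction ε using Sym2.inductionOn with
      | hf r s =>
        have hadj : (GkOn (k-2) R ↑V).Adj r s :=
          (SimpleGraph.mem_edgeSet _).mp (hEfin.mem_toFinset.mp hε)
        exact per_edge (k-2) R V p hp0 hp1 r s hadj
    calc (Eh.card : ℝ) * (p ^ 2 * (1 - p) ^ (k-2))
        = ∑ _ε ∈ Eh, p ^ 2 * (1 - p) ^ (k-2) := by rw [Finset.sum_const, nsmul_eq_mul]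
    _ ≤ _ := Finset.sum_le_sum this
  -- upper bound
  have hup : S ≤ (d/2) * (m:ℝ) ^ α * (p * m) := by
    have hstep : ∀ U ∈ V.powerset,
        ∑ ε ∈ Eh, w U * (if ε ∈ (GkOn 0 R ↑U).edgeSet then (1:ℝ) else 0)
          ≤ w U * ((d/2) * (m:ℝ) ^ α * U.card) := by
      intro U hU
      rw [← Finset.mul_sum, Finset.sum_boole]
      apply mul_le_mul_of_nonneg_left ?_ (hwnn U)
      -- filter card ≤ ncard edge set of G0 U
      have h1 : ((Eh.filter (fun ε => ε ∈ (GkOn 0 R ↑U).edgeSet)).card : ℝ)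
          ≤ (((GkOn 0 R ↑U).edgeSet).ncard : ℝ) := by
        have hsub : ↑(Eh.filter (fun ε => ε ∈ (GkOn 0 R ↑U).edgeSet))
            ⊆ (GkOn 0 R ↑U).edgeSet := by
          intro ε hε
          rw [Finset.coe_filter] at hε
          exact hε.2
        have := Set.ncard_le_ncard hsub (Set.toFinite _)
        rw [Set.ncard_coe_finset] at this
        exact_mod_cast this
      have h2 := hedges U
      have hUm : (U.card : ℝ) ≤ (m:ℝ) := by
        exact_mod_cast Finset.card_le_card (Finset.mem_powerset.mp hU)
      have h3 : ((U.card:ℝ)) ^ (1 + α) ≤ (m:ℝ) ^ α * U.card := by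
        have hu0 : (0:ℝ) ≤ (U.card : ℝ) := Nat.cast_nonneg _
        have : ((U.card:ℝ)) ^ (1 + α) = (U.card:ℝ) * (U.card:ℝ) ^ α := by
          rw [Real.rpow_add' hu0 (by linarith), Real.rpow_one]
        rw [this]
        have : ((U.card:ℝ)) ^ α ≤ (m:ℝ) ^ α := Real.rpow_le_rpow hu0 hUm hα0
        nlinarith
      calc ((Eh.filter (fun ε => ε ∈ (GkOn 0 R ↑U).edgeSet)).card : ℝ)
          ≤ (d/2) * ((U.card:ℝ)) ^ (1 + α) := le_trans h1 h2
      _ ≤ (d/2) * ((m:ℝ) ^ α * U.card) := by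
          apply mul_le_mul_of_nonneg_left h3 (by positivity)
      _ = (d/2) * (m:ℝ) ^ α * U.card := by ring
    calc S ≤ ∑ U ∈ V.powerset, w U * ((d/2) * (m:ℝ) ^ α * U.card) :=
        Finset.sum_le_sum hstep
    _ = (d/2) * (m:ℝ) ^ α * ∑ U ∈ V.powerset, w U * U.card := by
        rw [Finset.mul_sum]; apply Finset.sum_congr rfl; intro U _; ring
    _ = (d/2) * (m:ℝ) ^ α * (p * m) := by
        rw [hw]
        simp only []
        rw [sum_weights_card V p]
  -- combine
  have hc : 0 < p ^ 2 * (1 - p) ^ (k-2) := by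
    rcases eq_or_lt_of_le hk with h | h
    · have h0 : (1-p) ^ (k-2) = 1 := by rw [← h]; norm_num
      rw [h0, mul_one]; exact pow_pos hppos 2
    · have : (2:ℝ) < (k:ℝ) := by exact_mod_cast h
      have : 0 < 1 - p := by
        rw [hp]
        have : 1/((k:ℝ)-1) < 1 := by
          rw [div_lt_one (by linarith)]; linarith
        linarith
      positivity
  have hkey : (Eh.card : ℝ) * (p ^ 2 * (1 - p) ^ (k-2))
      ≤ (2 * d * k * (m:ℝ) ^ (1+α)) * (p ^ 2 * (1 - p) ^ (k-2)) := by
    have hrw : (m:ℝ) ^ (1+α) = (m:ℝ) * (m:ℝ) ^ α := by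
      rw [Real.rpow_add' (Nat.cast_nonneg _) (by linarith), Real.rpow_one]
    have hconst := const_ineq k hk
    rw [← hp] at hconst
    have hmα : (0:ℝ) ≤ (m:ℝ) ^ α := Real.rpow_nonneg (Nat.cast_nonneg _) α
    have h4 : (d/2) * (m:ℝ) ^ α * (p * m) ≤ (2 * d * k * (m:ℝ) ^ (1+α)) * (p ^ 2 * (1 - p) ^ (k-2)) := by
      rw [hrw]
      have expand : (2 * d * k * ((m:ℝ) * (m:ℝ) ^ α)) * (p ^ 2 * (1 - p) ^ (k-2))
          = ((d/2) * (m:ℝ) ^ α * (p * m)) * (4 * k * p * (1-p)^(k-2)) := by ring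
      rw [expand]
      have hbase : (0:ℝ) ≤ (d/2) * (m:ℝ) ^ α * (p * m) := by positivity
      nlinarith [mul_le_mul_of_nonneg_left hconst hbase]
    exact le_trans (le_trans hlow hup) h4
  have := le_of_mul_le_mul_right (by
    calc (Eh.card : ℝ) * (p ^ 2 * (1 - p) ^ (k-2)) ≤ _ := hkey) hc
  rw [hEcard]
  exact this

lemma exists_low_deg {ι : Type} [Fintype ι] (k : ℕ) (hk : 2 ≤ k) (α d : ℝ)
    (hα0 : 0 ≤ α) (hd : 0 < d) (R : ι → Set (ℝ × ℝ)) (n : ℕ) (hn : n = Fintype.card ι)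
    (hedges : ∀ V' : Finset ι,
      (((GkOn 0 R ↑V').edgeSet).ncard : ℝ) ≤ (d / 2) * (V'.card : ℝ) ^ (1 + α))
    (V : Finset ι) (hV : V.Nonempty) :
    ∃ v ∈ V, (({w | (GkOn (k-2) R ↑V).Adj v w}).ncard : ℝ) ≤ 4 * d * k * (n:ℝ) ^ α := by
  classical
  by_contra hcon
  push_neg at hcon
  set G := GkOn (k-2) R ↑V with hG
  letI : DecidableRel G.Adj := fun a b => Classical.dec _
  have hdeg : ∀ v, ({w | G.Adj v w}).ncard = G.degree v := by
    intro v
    have h1 : {w | G.Adj v w} = ↑(G.neighborFinset v) := by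
      rw [SimpleGraph.neighborFinset_def, Set.coe_toFinset]; rfl
    rw [h1, Set.ncard_coe_finset, SimpleGraph.card_neighborFinset_eq_degree]
  have hsum : ∑ v ∈ Finset.univ, G.degree v = 2 * G.edgeFinset.card :=
    SimpleGraph.sum_degrees_eq_twice_card_edges G
  have hedgecard : (G.edgeFinset.card : ℝ) ≤ 2 * d * k * (V.card : ℝ) ^ (1 + α) := by
    have := edge_count k hk α d hα0 hd R hedges V
    rwa [Set.ncard_eq_toFinset_card'] at this
  have hlow : (V.card : ℝ) * (4 * d * k * (n:ℝ) ^ α) < ∑ v ∈ V, (G.degree v : ℝ) := by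
    calc (V.card : ℝ) * (4 * d * k * (n:ℝ) ^ α)
        = ∑ _v ∈ V, 4 * d * k * (n:ℝ) ^ α := by rw [Finset.sum_const, nsmul_eq_mul]
    _ < ∑ v ∈ V, (G.degree v : ℝ) := by
        apply Finset.sum_lt_sum_of_nonempty hV
        intro v hv
        have := hcon v hv
        rwa [hdeg v] at this
  have hVuniv : ∑ v ∈ V, (G.degree v : ℝ) ≤ ∑ v ∈ Finset.univ, (G.degree v : ℝ) := by
    apply Finset.sum_le_sum_of_subset_of_nonneg (Finset.subset_univ V)
    intro i _ _; positivity
  have hcast : ∑ v ∈ Finset.univ, (G.degree v : ℝ) = 2 * (G.edgeFinset.card : ℝ) := by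
    rw [← Nat.cast_sum]
    rw [hsum]
    push_cast; ring
  have hmn : (V.card : ℝ) ≤ (n : ℝ) := by
    rw [hn]; exact_mod_cast Finset.card_le_univ V
  have hfin : 2 * (G.edgeFinset.card:ℝ) ≤ (V.card : ℝ) * (4 * d * k * (n:ℝ) ^ α) := by
    have h1 : (V.card : ℝ) ^ (1+α) = (V.card:ℝ) * (V.card:ℝ)^α := by
      rw [Real.rpow_add' (Nat.cast_nonneg _) (by linarith), Real.rpow_one]
    have h2 : ((V.card:ℝ))^α ≤ (n:ℝ)^α := Real.rpow_le_rpow (Nat.cast_nonneg _) hmn hα0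
    have hk0 : (0:ℝ) ≤ (k:ℝ) := Nat.cast_nonneg _
    have hm0 : (0:ℝ) ≤ (V.card:ℝ) := Nat.cast_nonneg _
    calc 2 * (G.edgeFinset.card : ℝ) ≤ 2 * (2 * d * k * (V.card : ℝ) ^ (1 + α)) := by linarith
    _ = (V.card:ℝ) * (4 * d * k * (V.card:ℝ)^α) := by rw [h1]; ring
    _ ≤ (V.card:ℝ) * (4 * d * k * (n:ℝ)^α) := by
        apply mul_le_mul_of_nonneg_left ?_ hm0
        apply mul_le_mul_of_nonneg_left h2 (by positivity)
  linarith

lemma greedy {ι : Type} [Fintype ι] (k : ℕ) (hk : 2 ≤ k) (R : ι → Set (ℝ × ℝ)) (D : ℕ)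
    (hmin : ∀ V : Finset ι, V.Nonempty → ∃ v ∈ V,
      ({w | (GkOn (k-2) R ↑V).Adj v w}).ncard ≤ D)
    (V : Finset ι) :
    ∃ φ : ι → ℕ, (∀ i, φ i ≤ D) ∧
      ∀ p : ℝ × ℝ, ∃ S ⊆ (hyperedge R p ∩ ↑V),
        S.ncard = min (hyperedge R p ∩ ↑V).ncard k ∧ Set.InjOn φ S := by
  classical
  induction V using Finset.strongInduction with
  | _ V ih =>
  rcases V.eq_empty_or_nonempty with rfl | hV
  · refine ⟨fun _ => 0, fun _ => Nat.zero_le _, fun p => ⟨∅, by simp, by simp, by simp⟩⟩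
  obtain ⟨v, hvV, hvdeg⟩ := hmin V hV
  obtain ⟨φ, hφD, hφ⟩ := ih (V.erase v) (Finset.erase_ssubset hvV)
  set G := GkOn (k-2) R ↑V with hG
  set Nv : Set ι := {w | G.Adj v w} with hNv
  have hNvV : Nv ⊆ ↑V := fun w hw => hw.2.2.1
  have hNfin : Nv.Finite := Set.Finite.subset V.finite_toSet hNvV
  set Nvf := hNfin.toFinset with hNvf
  have hNcard : Nvf.card ≤ D := by
    rw [hNvf, ← Set.ncard_eq_toFinset_card _ hNfin]; exact hvdeg
  have hcolor : ((Finset.range (D+1)) \ (Nvf.image φ)).Nonempty := by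
    rw [← Finset.card_pos]
    have h1 : (Nvf.image φ).card ≤ D := le_trans Finset.card_image_le hNcard
    have h2 := Finset.le_card_sdiff (Nvf.image φ) (Finset.range (D+1))
    rw [Finset.card_range] at h2
    omega
  obtain ⟨c, hc⟩ := hcolor
  rw [Finset.mem_sdiff, Finset.mem_range] at hc
  refine ⟨Function.update φ v c, ?_, ?_⟩
  · intro i
    rcases eq_or_ne i v with rfl | hiv
    · rw [Function.update_self]; omega
    · rw [Function.update_of_ne hiv]; exact hφD i
  intro p
  set e : Set ι := hyperedge R p with he
  have hVe : (↑(V.erase v) : Set ι) = ↑V \ {v} := by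
    rw [Finset.coe_erase]
  rcases Classical.em (p ∈ R v) with hpv | hpv
  · -- v is in the hyperedge
    have hve : v ∈ e := hpv
    have heV : e ∩ ↑V = insert v (e ∩ ↑(V.erase v)) := by
      rw [hVe]
      ext x
      simp only [Set.mem_inter_iff, Set.mem_insert_iff, Set.mem_diff, Set.mem_singleton_iff]
      constructor
      · rintro ⟨hxe, hxV⟩
        rcases eq_or_ne x v with rfl | hxv
        · exact Or.inl rfl
        · exact Or.inr ⟨hxe, hxV, hxv⟩
      · rintro (rfl | ⟨hxe, hxV, _⟩)
        · exact ⟨hve, hvV⟩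
        · exact ⟨hxe, hxV⟩
    have he'fin : (e ∩ ↑(V.erase v)).Finite :=
      Set.Finite.subset (V.erase v).finite_toSet (Set.inter_subset_right)
    have hvne' : v ∉ e ∩ ↑(V.erase v) := by
      rw [hVe]; rintro ⟨-, -, hvv⟩; exact hvv rfl
    have hcardeV : (e ∩ ↑V).ncard = (e ∩ ↑(V.erase v)).ncard + 1 := by
      rw [heV, Set.ncard_insert_of_notMem hvne' he'fin]
    obtain ⟨S', hS'sub, hS'card, hS'inj⟩ := hφ p
    have hvS' : v ∉ S' := fun h => hvne' (hS'sub h)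
    rcases le_or_gt k (e ∩ ↑(V.erase v)).ncard with hke | hke
    · -- enough colors already among the old ones
      refine ⟨S', ?_, ?_, ?_⟩
      · exact hS'sub.trans (by rw [heV]; exact Set.subset_insert _ _)
      · rw [hS'card, min_eq_right hke, min_eq_right (by omega)]
      · intro x hx y hy hxy
        have hxv : x ≠ v := fun h => hvS' (h ▸ hx)
        have hyv : y ≠ v := fun h => hvS' (h ▸ hy)
        rw [Function.update_of_ne hxv, Function.update_of_ne hyv] at hxy
        exact hS'inj hx hy hxy
    · -- S' = e ∩ V', add v
      have hS'e : S' = e ∩ ↑(V.erase v) := by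
        apply Set.eq_of_subset_of_ncard_le hS'sub ?_ he'fin
        rw [hS'card, min_eq_left hke.le]
      refine ⟨insert v S', ?_, ?_, ?_⟩
      · rw [heV, hS'e]
      · rw [Set.ncard_insert_of_notMem hvS' (he'fin.subset hS'sub), hS'card,
          min_eq_left hke.le, hcardeV, min_eq_left (by omega)]
      · -- injectivity
        have hadj : ∀ y ∈ S', G.Adj v y := by
          intro y hy
          have hyee : y ∈ e ∩ ↑(V.erase v) := hS'e ▸ hy
          obtain ⟨hye, hyV'⟩ := hyee
          rw [hVe] at hyV'
          obtain ⟨hyV, hyv⟩ := hyV'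
          rw [Set.mem_singleton_iff] at hyv
          refine ⟨fun h => hyv h.symm, hvV, hyV, p, hpv, hye, ?_⟩
          have hB : {t | t ∈ (↑V : Set ι) ∧ t ≠ v ∧ t ≠ y ∧ p ∈ R t}
              = (e ∩ ↑(V.erase v)) \ {y} := by
            rw [hVe]
            ext t
            simp only [Set.mem_setOf_eq, Set.mem_diff, Set.mem_inter_iff,
              Set.mem_singleton_iff]
            constructor
            · rintro ⟨htV, htv, hty, hpt⟩
              exact ⟨⟨hpt, htV, htv⟩, hty⟩
            · rintro ⟨⟨hpt, htV, htv⟩, hty⟩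
              exact ⟨htV, htv, hty, hpt⟩
          rw [hB]
          have hyee' : y ∈ e ∩ ↑(V.erase v) := hS'e ▸ hy
          rw [Set.ncard_diff_singleton_of_mem hyee']
          have hpos : 0 < (e ∩ ↑(V.erase v)).ncard :=
            (Set.ncard_pos he'fin).mpr ⟨y, hyee'⟩
          omega
        have hcmem : ∀ y ∈ S', φ y ∈ Nvf.image φ := by
          intro y hy
          refine Finset.mem_image.mpr ⟨y, ?_, rfl⟩
          rw [hNvf, Set.Finite.mem_toFinset]
          exact hadj y hy
        intro x hx y hy hxy
        rcases Set.mem_insert_iff.mp hx with rfl | hxS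
        · rcases Set.mem_insert_iff.mp hy with rfl | hyS
          · rfl
          · exfalso
            have hyv : y ≠ x := fun h => hvS' (h ▸ hyS)
            rw [Function.update_self, Function.update_of_ne hyv] at hxy
            exact hc.2 (hxy ▸ hcmem y hyS)
        · rcases Set.mem_insert_iff.mp hy with rfl | hyS
          · exfalso
            have hxv : x ≠ y := fun h => hvS' (h ▸ hxS)
            rw [Function.update_self, Function.update_of_ne hxv] at hxy
            exact hc.2 (hxy ▸ (hcmem x hxS))
          · have hxv : x ≠ v := fun h => hvS' (h ▸ hxS)
            have hyv : y ≠ v := fun h => hvS' (h ▸ hyS)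
            rw [Function.update_of_ne hxv, Function.update_of_ne hyv] at hxy
            exact hS'inj hxS hyS hxy
  · -- v not in the hyperedge
    have hvne : v ∉ e := hpv
    have heV : e ∩ ↑V = e ∩ ↑(V.erase v) := by
      rw [hVe]
      ext x
      simp only [Set.mem_inter_iff, Set.mem_diff, Set.mem_singleton_iff]
      constructor
      · rintro ⟨hxe, hxV⟩
        exact ⟨hxe, hxV, fun h => hvne (h ▸ hxe)⟩
      · rintro ⟨hxe, hxV, -⟩
        exact ⟨hxe, hxV⟩
    obtain ⟨S', hS'sub, hS'card, hS'inj⟩ := hφ p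
    have hvS' : v ∉ S' := by
      intro h
      have := hS'sub h
      rw [hVe] at this
      exact this.2.2 rfl
    refine ⟨S', by rw [heV]; exact hS'sub, by rw [heV]; exact hS'card, ?_⟩
    intro x hx y hy hxy
    have hxv : x ≠ v := fun h => hvS' (h ▸ hx)
    have hyv : y ≠ v := fun h => hvS' (h ▸ hy)
    rw [Function.update_of_ne hxv, Function.update_of_ne hyv] at hxy
    exact hS'inj hx hy hxy

theorem stmt4 {ι : Type} [Fintype ι] (k : ℕ) (hk : 2 ≤ k) (α d : ℝ)
    (hα0 : 0 ≤ α) (hα1 : α ≤ 1) (hd : 0 < d) (R : ι → Set (ℝ × ℝ))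
    (n : ℕ) (hn : n = Fintype.card ι)
    (hedges : ∀ V' : Finset ι,
      (((GkOn 0 R ↑V').edgeSet).ncard : ℝ) ≤ (d / 2) * (V'.card : ℝ) ^ (1 + α)) :
    ∃ φ : ι → ℕ,
      ((Finset.univ.image φ).card : ℝ) ≤ 4 * d * k * (n : ℝ) ^ α + 1 ∧
      ∀ p : ℝ × ℝ, ∃ S ⊆ hyperedge R p,
        S.ncard = min (hyperedge R p).ncard k ∧ Set.InjOn φ S := by
  classical
  set D : ℕ := ⌊4 * d * k * (n:ℝ) ^ α⌋₊ with hD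
  have hDnn : (0:ℝ) ≤ 4 * d * k * (n:ℝ) ^ α := by
    have : (0:ℝ) ≤ (n:ℝ) ^ α := Real.rpow_nonneg (Nat.cast_nonneg _) α
    positivity
  have hmin : ∀ V : Finset ι, V.Nonempty → ∃ v ∈ V,
      ({w | (GkOn (k-2) R ↑V).Adj v w}).ncard ≤ D := by
    intro V hV
    obtain ⟨v, hvV, hdeg⟩ := exists_low_deg k hk α d hα0 hd R n hn hedges V hV
    exact ⟨v, hvV, Nat.le_floor hdeg⟩
  obtain ⟨φ, hφD, hφ⟩ := greedy k hk R D hmin Finset.univ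
  refine ⟨φ, ?_, ?_⟩
  · have hsub : Finset.univ.image φ ⊆ Finset.range (D+1) := by
      intro c hc
      obtain ⟨i, -, rfl⟩ := Finset.mem_image.mp hc
      rw [Finset.mem_range]
      exact Nat.lt_succ_of_le (hφD i)
    have h1 : (Finset.univ.image φ).card ≤ D + 1 := by
      have := Finset.card_le_card hsub
      rwa [Finset.card_range] at this
    have h2 : ((D:ℝ)) ≤ 4 * d * k * (n:ℝ) ^ α := Nat.floor_le hDnn
    calc ((Finset.univ.image φ).card : ℝ) ≤ (D:ℝ) + 1 := by exact_mod_cast h1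
    _ ≤ 4 * d * k * (n:ℝ) ^ α + 1 := by linarith
  · intro p
    have huniv : hyperedge R p ∩ ↑(Finset.univ : Finset ι) = hyperedge R p := by
      rw [Finset.coe_univ, Set.inter_univ]
    obtain ⟨S, hS, hScard, hSinj⟩ := hφ p
    rw [huniv] at hS hScard
    exact ⟨S, hS, hScard, hSinj⟩
end

section
/- Let k ≥ 2 be an integer, let 0 ≤ α ≤ 1 be a real, and let d > 0 be a constant. Let R be a finite family of n ≥ 2 regions (subsets) of ℝ² such that for every subfamily R' ⊆ R with m regions, the graph G_0(R') has at most (d/2)·m^{1+α} edges, and let H = H(R). Then there exists a constant C depending only on d and α such that: if α = 0 then H admits a (k−1)-strong-conflict-free coloring with at most C·k·log n colors, and if 0 < α ≤ 1 then H admits a (k−1)-strong-conflict-free coloring with at most C·k·n^α colors. -/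
set_option maxHeartbeats 1000000
open Finset


/-- A coloring `φ` of the family of regions `R` is `k`-strong-conflict-free for the
induced hypergraph `H(R)` if every hyperedge of size at least `k` contains `k` regions
whose colors appear exactly once in the hyperedge, and every hyperedge of size less
than `k` is rainbow. -/
def IsSCFRegions {ι : Type} (k : ℕ) (R : ι → Set (ℝ × ℝ)) (φ : ι → ℕ) : Prop :=
  ∀ p : ℝ × ℝ,
    (k ≤ (hyperedge R p).ncard → ∃ S ⊆ hyperedge R p, S.ncard = k ∧
        ∀ i ∈ S, ∀ j ∈ hyperedge R p, φ j = φ i → j = i) ∧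
    ((hyperedge R p).ncard < k → Set.InjOn φ (hyperedge R p))



open scoped Classical in
/-- hyperedge within subfamily V at point p, as a Finset. -/
noncomputable def eVF {ι : Type} (R : ι → Set (ℝ × ℝ)) (V : Finset ι) (p : ℝ × ℝ) : Finset ι :=
  V.filter (fun i => p ∈ R i)

section XX
set_option linter.unusedSectionVars false
open scoped Classical
variable {ι : Type} [Fintype ι] (R : ι → Set (ℝ × ℝ))

lemma mem_eVF {V : Finset ι} {p} {i} : i ∈ eVF R V p ↔ i ∈ V ∧ p ∈ R i := by
  simp [eVF]

lemma others_eq (V : Finset ι) (p : ℝ × ℝ) (r s : ι) :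
    {t | t ∈ (↑V : Set ι) ∧ t ≠ r ∧ t ≠ s ∧ p ∈ R t} = ↑(((eVF R V p).erase s).erase r) := by
  ext t; simp [mem_eVF, and_comm, and_assoc]; tauto

lemma others_ncard {V : Finset ι} {p : ℝ × ℝ} {r s : ι} (hr : r ∈ eVF R V p)
    (hs : s ∈ eVF R V p) (hrs : r ≠ s) :
    {t | t ∈ (↑V : Set ι) ∧ t ≠ r ∧ t ≠ s ∧ p ∈ R t}.ncard = (eVF R V p).card - 2 := by
  rw [others_eq, Set.ncard_coe_finset, card_erase_of_mem (mem_erase.2 ⟨hrs, hr⟩),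
    card_erase_of_mem hs]
  omega

lemma adj_of_point {V : Finset ι} {p : ℝ × ℝ} {r s : ι} {K : ℕ} (hrs : r ≠ s)
    (hr : r ∈ eVF R V p) (hs : s ∈ eVF R V p) (hcard : (eVF R V p).card ≤ K + 2) :
    (GkOn K R ↑V).Adj r s := by
  refine ⟨hrs, (mem_eVF R).1 hr |>.1, (mem_eVF R).1 hs |>.1, p, ((mem_eVF R).1 hr).2,
    ((mem_eVF R).1 hs).2, ?_⟩
  rw [others_ncard R hr hs hrs]
  omega

lemma edgeSet_ncard_eq (G : SimpleGraph ι) : G.edgeSet.ncard = G.edgeFinset.card := by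
  rw [Set.ncard_eq_toFinset_card']
  exact congrArg Finset.card (by ext e; simp)


lemma adj_mem_left {K : ℕ} {V : Finset ι} {r s : ι} (h : (GkOn K R ↑V).Adj r s) : r ∈ V := h.2.1

lemma sum_deg (K : ℕ) (V : Finset ι) :
    ∑ r ∈ V, (GkOn K R ↑V).degree r = 2 * (GkOn K R ↑V).edgeFinset.card := by
  refine Eq.trans ?_ (SimpleGraph.sum_degrees_eq_twice_card_edges _)
  refine Finset.sum_subset (subset_univ V) ?_
  intro r _ hrV
  rw [SimpleGraph.degree, Finset.card_eq_zero, Finset.eq_empty_iff_forall_notMem]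
  intro s hs
  exact hrV (adj_mem_left R ((SimpleGraph.mem_neighborFinset _ _ _).1 hs))

lemma deg_le (K : ℕ) (V : Finset ι) (r : ι) :
    (GkOn K R ↑V).degree r ≤ V.card - 1 := by
  by_cases hr : r ∈ V
  · have : (GkOn K R ↑V).neighborFinset r ⊆ V.erase r := by
      intro s hs
      have h := (SimpleGraph.mem_neighborFinset _ _ _).1 hs
      exact Finset.mem_erase.2 ⟨fun e => h.1 e.symm, adj_mem_left R h.symm⟩
    calc (GkOn K R ↑V).degree r ≤ (V.erase r).card := Finset.card_le_card this
    _ = V.card - 1 := Finset.card_erase_of_mem hr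
  · have : (GkOn K R ↑V).neighborFinset r = ∅ := by
      rw [Finset.eq_empty_iff_forall_notMem]
      intro s hs
      exact hr (adj_mem_left R ((SimpleGraph.mem_neighborFinset _ _ _).1 hs))
    simp [SimpleGraph.degree, this]

lemma edge_card_le_sq (K : ℕ) (V : Finset ι) :
    2 * (GkOn K R ↑V).edgeFinset.card ≤ V.card * (V.card - 1) := by
  rw [← sum_deg R K V]
  calc ∑ r ∈ V, (GkOn K R ↑V).degree r ≤ ∑ _r ∈ V, (V.card - 1) :=
        Finset.sum_le_sum (fun r _ => deg_le R K V r)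
  _ = V.card * (V.card - 1) := by rw [Finset.sum_const, smul_eq_mul]


lemma per_edge_count {V : Finset ι} {K t : ℕ} (ht2 : 2 ≤ t) {r s : ι}
    (hadj : (GkOn K R ↑V).Adj r s) :
    (V.card - (K+2)).choose (t-2) ≤
      ((V.powersetCard t).filter
        (fun S : Finset ι => s(r,s) ∈ (GkOn 0 R ↑S).edgeFinset)).card := by
  obtain ⟨hne, hrV, hsV, p, hpr, hps, hT⟩ := hadj
  set Tset : Set ι := {u | u ∈ (↑V : Set ι) ∧ u ≠ r ∧ u ≠ s ∧ p ∈ R u} with hTset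
  have hTfin : Tset.Finite := V.finite_toSet.subset (fun u hu => hu.1)
  set Tf : Finset ι := hTfin.toFinset with hTf
  have hTcard : Tf.card ≤ K := by
    rw [hTf, ← Set.ncard_eq_toFinset_card Tset hTfin]; exact hT
  set W : Finset ι := V \ (insert r (insert s Tf)) with hW
  have hWcard : V.card - (K+2) ≤ W.card := by
    have hsub : insert r (insert s Tf) ⊆ V := by
      intro u hu
      simp only [Finset.mem_insert] at hu
      rcases hu with rfl|rfl|hu
      · exact hrV
      · exact hsV
      · exact (hTfin.mem_toFinset.1 hu).1
    have : (insert r (insert s Tf)).card ≤ K + 2 := by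
      calc (insert r (insert s Tf)).card ≤ Tf.card + 2 := by
            refine le_trans (Finset.card_insert_le _ _) ?_
            have := Finset.card_insert_le s Tf
            omega
      _ ≤ K + 2 := by omega
    rw [hW, Finset.card_sdiff_of_subset hsub]
    omega
  have hmain : (W.powersetCard (t-2)).card ≤
      ((V.powersetCard t).filter
        (fun S : Finset ι => s(r,s) ∈ (GkOn 0 R ↑S).edgeFinset)).card := by
    refine Finset.card_le_card_of_injOn (fun S' : Finset ι => insert r (insert s S')) ?_ ?_
    · intro S' hS'
      rw [Finset.mem_coe, Finset.mem_powersetCard] at hS'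
      obtain ⟨hS'W, hS'card⟩ := hS'
      have hrS' : r ∉ S' := fun h => by
        have := hS'W h; rw [hW] at this
        exact (Finset.mem_sdiff.1 this).2 (Finset.mem_insert_self _ _)
      have hsS' : s ∉ S' := fun h => by
        have := hS'W h; rw [hW] at this
        exact (Finset.mem_sdiff.1 this).2 (Finset.mem_insert.2 (Or.inr (Finset.mem_insert_self _ _)))
      have hsubV : insert r (insert s S') ⊆ V := by
        intro u hu
        simp only [Finset.mem_insert] at hu
        rcases hu with rfl|rfl|hu
        · exact hrV
        · exact hsV
        · exact (Finset.mem_sdiff.1 (hS'W hu)).1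
      have hmem : insert r (insert s S') ∈ V.powersetCard t := by
        refine Finset.mem_powersetCard.2 ⟨hsubV, ?_⟩
        rw [Finset.card_insert_of_notMem, Finset.card_insert_of_notMem hsS', hS'card]
        · omega
        · simp only [Finset.mem_insert]
          push_neg
          exact ⟨hne, hrS'⟩
      have hedge : s(r,s) ∈ (GkOn 0 R ↑(insert r (insert s S') : Finset ι)).edgeFinset := by
        rw [SimpleGraph.mem_edgeFinset, SimpleGraph.mem_edgeSet]
        refine ⟨hne, by simp, by simp, p, hpr, hps, ?_⟩
        have hemp : {u | u ∈ (↑(insert r (insert s S') : Finset ι) : Set ι) ∧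
            u ≠ r ∧ u ≠ s ∧ p ∈ R u} = ∅ := by
          rw [Set.eq_empty_iff_forall_notMem]
          rintro u ⟨huS, hur, hus, hup⟩
          simp only [Finset.coe_insert, Set.mem_insert_iff, Finset.mem_coe] at huS
          rcases huS with rfl|rfl|huS
          · exact hur rfl
          · exact hus rfl
          · have huW := hS'W huS
            rw [hW] at huW
            have huV := (Finset.mem_sdiff.1 huW).1
            have : u ∈ Tf := hTfin.mem_toFinset.2 ⟨huV, hur, hus, hup⟩
            exact (Finset.mem_sdiff.1 huW).2
              (Finset.mem_insert.2 (Or.inr (Finset.mem_insert.2 (Or.inr this))))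
        rw [hemp]
        simp
      exact Finset.mem_filter.2 ⟨hmem, hedge⟩
    · intro S1 h1 S2 h2 heq
      simp only [Finset.mem_coe, Finset.mem_powersetCard] at h1 h2
      have key : ∀ S' : Finset ι, S' ⊆ W → ((insert r (insert s S')).erase s).erase r = S' := by
        intro S' hS'W
        have hrS' : r ∉ S' := fun h => by
          have := hS'W h; rw [hW] at this
          exact (Finset.mem_sdiff.1 this).2 (Finset.mem_insert_self _ _)
        have hsS' : s ∉ S' := fun h => by
          have := hS'W h; rw [hW] at this
          exact (Finset.mem_sdiff.1 this).2
            (Finset.mem_insert.2 (Or.inr (Finset.mem_insert_self _ _)))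
        ext u
        simp only [Finset.mem_erase, Finset.mem_insert]
        constructor
        · rintro ⟨hur, hus, h⟩
          rcases h with rfl|rfl|h
          · exact absurd rfl hur
          · exact absurd rfl hus
          · exact h
        · intro hu
          exact ⟨fun e => hrS' (e ▸ hu), fun e => hsS' (e ▸ hu), Or.inr (Or.inr hu)⟩
      have h3 := congrArg (fun X : Finset ι => (X.erase s).erase r) heq
      simpa [key S1 h1.1, key S2 h2.1] using h3
  calc (V.card - (K+2)).choose (t-2) ≤ W.card.choose (t-2) :=
        Nat.choose_le_choose _ hWcard
  _ = (W.powersetCard (t-2)).card := (Finset.card_powersetCard _ _).symm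
  _ ≤ _ := hmain


lemma double_count {V : Finset ι} {K t : ℕ} (ht2 : 2 ≤ t) :
    (GkOn K R ↑V).edgeFinset.card * (V.card - (K+2)).choose (t-2)
      ≤ ∑ S ∈ V.powersetCard t, (GkOn 0 R ↑S).edgeFinset.card := by
  classical
  set P := V.powersetCard t with hP
  set EK := (GkOn K R ↑V).edgeFinset with hEK
  have step1 : ∀ e ∈ EK, (V.card - (K+2)).choose (t-2) ≤
      (P.filter (fun S : Finset ι => e ∈ (GkOn 0 R ↑S).edgeFinset)).card := by
    intro e he
    induction e with
    | _ r s =>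
      exact per_edge_count R ht2 ((SimpleGraph.mem_edgeSet _).1 (SimpleGraph.mem_edgeFinset.1 he))
  calc EK.card * (V.card - (K+2)).choose (t-2)
      = ∑ _e ∈ EK, (V.card - (K+2)).choose (t-2) := by
        rw [Finset.sum_const, smul_eq_mul]
    _ ≤ ∑ e ∈ EK, (P.filter (fun S : Finset ι => e ∈ (GkOn 0 R ↑S).edgeFinset)).card :=
        Finset.sum_le_sum step1
    _ = ∑ e ∈ EK, ∑ S ∈ P, (if e ∈ (GkOn 0 R ↑S).edgeFinset then 1 else 0) := by
        refine Finset.sum_congr rfl (fun e _ => ?_)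
        rw [Finset.card_filter]
    _ = ∑ S ∈ P, ∑ e ∈ EK, (if e ∈ (GkOn 0 R ↑S).edgeFinset then 1 else 0) :=
        Finset.sum_comm
    _ = ∑ S ∈ P, (EK.filter (fun e => e ∈ (GkOn 0 R ↑S).edgeFinset)).card := by
        refine Finset.sum_congr rfl (fun S _ => ?_)
        rw [Finset.card_filter]
    _ ≤ ∑ S ∈ P, (GkOn 0 R ↑S).edgeFinset.card := by
        refine Finset.sum_le_sum (fun S _ => ?_)
        exact Finset.card_le_card (fun e he => (Finset.mem_filter.1 he).2)


lemma cast_descF (n l : ℕ) (h : l ≤ n) :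
    ((n.descFactorial l : ℕ) : ℝ) = ∏ i ∈ Finset.range l, ((n:ℝ) - i) := by
  rw [Nat.descFactorial_eq_prod_range, Nat.cast_prod]
  refine Finset.prod_congr rfl (fun i hi => ?_)
  have : i ≤ n := le_trans (le_of_lt (Finset.mem_range.1 hi)) h
  push_cast [Nat.cast_sub this]
  ring

lemma desc_comp {K m t : ℕ} (hK : 1 ≤ K) (hm : 4*(K+1) ≤ m) (ht : t = m/(K+1)) :
    ((m-2).descFactorial (t-2) : ℝ) ≤ Real.exp 2 * ((m-(K+2)).descFactorial (t-2)) := by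
  have htK : t*(K+1) ≤ m := ht ▸ Nat.div_mul_le_self m (K+1)
  have ht4 : 4 ≤ t := by
    rw [ht]; exact (Nat.le_div_iff_mul_le (by omega)).2 (by omega)
  have htm : t + K + 1 ≤ m := le_trans (by nlinarith) htK
  have h1 : t - 2 ≤ m - 2 := by omega
  have h2 : t - 2 ≤ m - (K+2) := by omega
  rw [cast_descF _ _ h1, cast_descF _ _ h2]
  have hc2 : ((m - 2 : ℕ) : ℝ) = (m:ℝ) - 2 := by
    push_cast [Nat.cast_sub (by omega : 2 ≤ m)]; ring
  have hcK : ((m - (K+2) : ℕ) : ℝ) = (m:ℝ) - K - 2 := by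
    push_cast [Nat.cast_sub (by omega : K+2 ≤ m)]; ring
  rw [hc2, hcK]
  -- real facts
  have hKr : (1:ℝ) ≤ K := by exact_mod_cast hK
  have htKr : (t:ℝ)*(K+1) ≤ m := by exact_mod_cast htK
  have ht4r : (4:ℝ) ≤ t := by exact_mod_cast ht4
  have htmr : (t:ℝ) + K + 1 ≤ m := by exact_mod_cast htm
  have hden : (0:ℝ) < (m:ℝ) - t - K + 1 := by linarith
  set x : ℝ := (K:ℝ)/((m:ℝ) - t - K + 1) with hx
  have hx0 : 0 ≤ x := div_nonneg (by linarith) (le_of_lt hden)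
  have hxK : x * ((m:ℝ) - t - K + 1) = K := div_mul_cancel₀ _ (ne_of_gt hden)
  have hfac : ∀ i ∈ Finset.range (t-2), (m:ℝ) - 2 - i ≤ (1+x)*((m:ℝ) - K - 2 - i) := by
    intro i hi
    have hi' : (i:ℝ) ≤ (t:ℝ) - 3 := by
      have := Finset.mem_range.1 hi
      have : (i:ℝ) ≤ (t-2 : ℕ) - 1 := by
        have h3 : i + 1 ≤ t - 2 := Finset.mem_range.1 hi
        have : ((i+1 : ℕ):ℝ) ≤ ((t-2:ℕ):ℝ) := by exact_mod_cast h3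
        push_cast at this; linarith
      have hc : ((t-2:ℕ):ℝ) = (t:ℝ) - 2 := by
        push_cast [Nat.cast_sub (by omega : 2 ≤ t)]; ring
      rw [hc] at this; linarith
    have hge : (m:ℝ) - K - 2 - i ≥ (m:ℝ) - t - K + 1 := by linarith
    have : x * ((m:ℝ) - K - 2 - i) ≥ (K:ℝ) := by
      calc x * ((m:ℝ) - K - 2 - i) ≥ x * ((m:ℝ) - t - K + 1) := by
            exact mul_le_mul_of_nonneg_left hge hx0
      _ = K := hxK
    nlinarith
  have hnonneg : ∀ i ∈ Finset.range (t-2), (0:ℝ) ≤ (m:ℝ) - 2 - i := by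
    intro i hi
    have h3 : (i:ℝ) < ((t-2:ℕ):ℝ) := by exact_mod_cast Finset.mem_range.1 hi
    have hc : ((t-2:ℕ):ℝ) = (t:ℝ) - 2 := by
      push_cast [Nat.cast_sub (by omega : 2 ≤ t)]; ring
    rw [hc] at h3
    linarith
  calc ∏ i ∈ Finset.range (t-2), ((m:ℝ) - 2 - i)
      ≤ ∏ i ∈ Finset.range (t-2), (1+x)*((m:ℝ) - K - 2 - i) :=
        Finset.prod_le_prod hnonneg hfac
    _ = (1+x)^(t-2) * ∏ i ∈ Finset.range (t-2), ((m:ℝ) - K - 2 - i) := by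
        rw [Finset.prod_mul_distrib, Finset.prod_const, Finset.card_range]
    _ ≤ Real.exp 2 * ∏ i ∈ Finset.range (t-2), ((m:ℝ) - K - 2 - i) := by
        have hprodnn : (0:ℝ) ≤ ∏ i ∈ Finset.range (t-2), ((m:ℝ) - K - 2 - i) := by
          refine Finset.prod_nonneg (fun i hi => ?_)
          have h3 : (i:ℝ) < ((t-2:ℕ):ℝ) := by exact_mod_cast Finset.mem_range.1 hi
          have hc : ((t-2:ℕ):ℝ) = (t:ℝ) - 2 := by
            push_cast [Nat.cast_sub (by omega : 2 ≤ t)]; ring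
          rw [hc] at h3
          linarith
        refine mul_le_mul_of_nonneg_right ?_ hprodnn
        have e1 : (1+x)^(t-2) ≤ Real.exp x ^ (t-2) := by
          refine pow_le_pow_left₀ (by linarith) ?_ _
          linarith [Real.add_one_le_exp x]
        have e3 : x * ((t:ℝ)-2) ≤ 2 := by
          rw [hx, div_mul_eq_mul_div, div_le_iff₀ hden]
          nlinarith
        have hc : ((t-2:ℕ):ℝ) = (t:ℝ) - 2 := by
          push_cast [Nat.cast_sub (by omega : 2 ≤ t)]; ring
        calc (1+x)^(t-2) ≤ Real.exp x ^ (t-2) := e1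
          _ = Real.exp (((t-2:ℕ):ℝ) * x) := (Real.exp_nat_mul x (t-2)).symm
          _ ≤ Real.exp 2 := by
              rw [hc]
              refine Real.exp_le_exp.2 ?_
              linarith [e3]
      

lemma choose_id {m t : ℕ} (hm : 2 ≤ m) (ht : 2 ≤ t) :
    m.choose t * (t*(t-1)) = m*(m-1)*((m-2).choose (t-2)) := by
  obtain ⟨a, rfl⟩ : ∃ a, m = a + 2 := ⟨m - 2, by omega⟩
  obtain ⟨b, rfl⟩ : ∃ b, t = b + 2 := ⟨t - 2, by omega⟩
  have h1 := Nat.add_one_mul_choose_eq (a+1) (b+1)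
  have h2 := Nat.add_one_mul_choose_eq a b
  have hs1 : a+2-1 = a+1 := by omega
  have hs2 : b+2-1 = b+1 := by omega
  have hs3 : a+2-2 = a := by omega
  have hs4 : b+2-2 = b := by omega
  rw [hs1, hs2, hs3, hs4]
  calc (a+2).choose (b+2) * ((b+2)*(b+1))
      = ((a+2).choose (b+2) * (b+2)) * (b+1) := by ring
    _ = ((a+1+1) * (a+1).choose (b+1)) * (b+1) := by rw [← h1]
    _ = (a+2) * ((a+1).choose (b+1) * (b+1)) := by ring
    _ = (a+2) * ((a+1) * a.choose b) := by rw [← h2]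
    _ = (a+2)*(a+1)*(a.choose b) := by ring

lemma choose_comp {K m t : ℕ} (hK : 1 ≤ K) (hm : 4*(K+1) ≤ m) (ht : t = m/(K+1)) :
    ((m-2).choose (t-2) : ℝ) ≤ Real.exp 2 * ((m-(K+2)).choose (t-2)) := by
  have hd := desc_comp hK hm ht
  rw [Nat.descFactorial_eq_factorial_mul_choose, Nat.descFactorial_eq_factorial_mul_choose] at hd
  push_cast at hd
  have hfpos : (0:ℝ) < ((t-2).factorial : ℝ) := by
    exact_mod_cast Nat.factorial_pos _
  rw [mul_comm (Real.exp 2) _, mul_assoc] at hd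
  have := (mul_le_mul_iff_right₀ hfpos).1 hd
  linarith [this]

variable (d α : ℝ)

lemma sparse_GK (hd : 0 < d) (hα0 : 0 ≤ α) (hα1 : α ≤ 1)
    (hH : ∀ V' : Finset ι, (((GkOn 0 R ↑V').edgeSet).ncard : ℝ) ≤ (d/2) * (V'.card:ℝ)^(1+α))
    {K : ℕ} (hK : 1 ≤ K) (V : Finset ι) :
    ((GkOn K R ↑V).edgeFinset.card : ℝ) ≤ (K+1)*(15*d+2) * (V.card:ℝ)^(1+α) := by
  classical
  set m := V.card with hm
  have hsq := edge_card_le_sq R K V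
  rw [← hm] at hsq
  by_cases hm0 : m = 0
  · have hz : m * (m-1) = 0 := by rw [hm0]
    have : (GkOn K R ↑V).edgeFinset.card = 0 := by omega
    rw [this, hm0]
    simp [Real.zero_rpow (by positivity : (1:ℝ)+α ≠ 0)]
  have hm1 : 1 ≤ m := by omega
  have hm1r : (1:ℝ) ≤ (m:ℝ) := by exact_mod_cast hm1
  have hmm : (m:ℝ) ≤ (m:ℝ)^(1+α) := by
    calc (m:ℝ) = (m:ℝ)^(1:ℝ) := (Real.rpow_one _).symm
    _ ≤ (m:ℝ)^(1+α) := Real.rpow_le_rpow_of_exponent_le hm1r (by linarith)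
  by_cases hsmall : m ≤ 4*(K+1)
  · -- small case
    have h1 : ((GkOn K R ↑V).edgeFinset.card : ℝ) ≤ (m:ℝ)*(m-1)/2 := by
      have : ((2 * (GkOn K R ↑V).edgeFinset.card : ℕ) : ℝ) ≤ ((m * (m-1) : ℕ):ℝ) := by
        exact_mod_cast hsq
      push_cast [Nat.cast_sub hm1] at this
      linarith
    have h2 : (m:ℝ) - 1 ≤ 4*((K:ℝ)+1) := by
      have : (m:ℝ) ≤ 4*((K:ℝ)+1) := by exact_mod_cast hsmall
      linarith
    have hKr : (0:ℝ) ≤ (K:ℝ) := by positivity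
    calc ((GkOn K R ↑V).edgeFinset.card : ℝ) ≤ (m:ℝ)*(m-1)/2 := h1
      _ ≤ (m:ℝ)*(4*((K:ℝ)+1))/2 := by
          have hm0r : (0:ℝ) ≤ (m:ℝ) := by positivity
          have h3 : (m:ℝ)*((m:ℝ)-1) ≤ (m:ℝ)*(4*((K:ℝ)+1)) := mul_le_mul_of_nonneg_left h2 hm0r
          linarith
      _ = 2*((K:ℝ)+1)*(m:ℝ) := by ring
      _ ≤ 2*((K:ℝ)+1)*(m:ℝ)^(1+α) := by
          refine mul_le_mul_of_nonneg_left hmm (by positivity)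
      _ ≤ (K+1)*(15*d+2) * (m:ℝ)^(1+α) := by
          have h4 : 2*((K:ℝ)+1) ≤ ((K:ℝ)+1)*(15*d+2) := by nlinarith
          exact mul_le_mul_of_nonneg_right h4 (by positivity)
  · -- main case
    push_neg at hsmall
    have hm4 : 4*(K+1) ≤ m := le_of_lt hsmall
    set t := m / (K+1) with htdef
    have htK : t*(K+1) ≤ m := Nat.div_mul_le_self m (K+1)
    have ht4 : 4 ≤ t := (Nat.le_div_iff_mul_le (by omega)).2 (by omega)
    have htm : t + K + 1 ≤ m := le_trans (by nlinarith) htK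
    have hmlt : m < (t+1)*(K+1) := by
      have : m / (K+1) < t + 1 := by omega
      exact (Nat.div_lt_iff_lt_mul (by omega)).1 this
    -- real versions
    have hKr : (1:ℝ) ≤ (K:ℝ) := by exact_mod_cast hK
    have ht4r : (4:ℝ) ≤ (t:ℝ) := by exact_mod_cast ht4
    have htmr : (t:ℝ) + K + 1 ≤ (m:ℝ) := by exact_mod_cast htm
    have hmltr : (m:ℝ) < ((t:ℝ)+1)*((K:ℝ)+1) := by exact_mod_cast hmlt
    have htpos : (0:ℝ) < t := by linarith
    -- double counting chain
    have hCbpos : (0:ℝ) < ((m-(K+2)).choose (t-2) : ℝ) := by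
      have : t - 2 ≤ m - (K+2) := by omega
      exact_mod_cast Nat.choose_pos this
    have hN1 : ((GkOn K R ↑V).edgeFinset.card : ℝ) * ((m-(K+2)).choose (t-2) : ℝ)
        ≤ (m.choose t : ℝ) * ((d/2) * (t:ℝ)^(1+α)) := by
      have hdc := double_count R (K := K) (V := V) (t := t) (by omega)
      have hup : (∑ S ∈ V.powersetCard t, ((GkOn 0 R ↑S).edgeFinset.card : ℝ))
          ≤ (m.choose t : ℝ) * ((d/2) * (t:ℝ)^(1+α)) := by
        calc (∑ S ∈ V.powersetCard t, ((GkOn 0 R ↑S).edgeFinset.card : ℝ))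
            ≤ ∑ S ∈ V.powersetCard t, (d/2) * (t:ℝ)^(1+α) := by
              refine Finset.sum_le_sum (fun S hS => ?_)
              have hcard : S.card = t := (Finset.mem_powersetCard.1 hS).2
              have := hH S
              rw [edgeSet_ncard_eq, hcard] at this
              exact this
          _ = (m.choose t : ℝ) * ((d/2) * (t:ℝ)^(1+α)) := by
              rw [Finset.sum_const, Finset.card_powersetCard, ← hm, nsmul_eq_mul]
      calc ((GkOn K R ↑V).edgeFinset.card : ℝ) * ((m-(K+2)).choose (t-2) : ℝ)
          = (((GkOn K R ↑V).edgeFinset.card * (m-(K+2)).choose (t-2) : ℕ) : ℝ) := by push_cast; ring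
        _ ≤ (∑ S ∈ V.powersetCard t, ((GkOn 0 R ↑S).edgeFinset.card : ℝ)) := by
            rw [← Nat.cast_sum]
            exact_mod_cast hdc
        _ ≤ _ := hup
    have hN2 : (m.choose t : ℝ) * ((t:ℝ)*((t:ℝ)-1)) = (m:ℝ)*((m:ℝ)-1)*((m-2).choose (t-2) : ℝ) := by
      have := choose_id (m := m) (t := t) (by omega) (by omega)
      have hc : ((m.choose t * (t*(t-1)) : ℕ) : ℝ) = ((m*(m-1)*((m-2).choose (t-2)) : ℕ):ℝ) := by
        exact_mod_cast this
      push_cast [Nat.cast_sub (by omega : 1 ≤ t), Nat.cast_sub (by omega : 1 ≤ m)] at hc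
      linarith
    have hN3 : ((m-2).choose (t-2) : ℝ) ≤ Real.exp 2 * ((m-(K+2)).choose (t-2)) :=
      choose_comp hK hm4 htdef
    -- combine
    set E : ℝ := ((GkOn K R ↑V).edgeFinset.card : ℝ) with hE
    have hE0 : 0 ≤ E := by positivity
    have htα : (t:ℝ)^(1+α) = (t:ℝ) * (t:ℝ)^α := by
      rw [Real.rpow_add htpos, Real.rpow_one]
    have htm' : (t:ℝ)^α ≤ (m:ℝ)^α := Real.rpow_le_rpow (le_of_lt htpos) (by linarith) hα0
    have hmα : (m:ℝ)^(1+α) = (m:ℝ) * (m:ℝ)^α := by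
      rw [Real.rpow_add (by linarith), Real.rpow_one]
    have he2 : Real.exp 2 < 7.39 := by
      have h1 := Real.exp_one_lt_d9
      have : Real.exp 2 = Real.exp 1 * Real.exp 1 := by
        rw [← Real.exp_add]; norm_num
      rw [this]
      nlinarith [h1, Real.exp_pos 1]
    -- step: E * (t*(t-1)) ≤ exp 2 * m * (m-1) * (d/2) * t^(1+α)
    have hstep : E * ((t:ℝ)*((t:ℝ)-1)) ≤ Real.exp 2 * ((m:ℝ)*((m:ℝ)-1)) * ((d/2) * (t:ℝ)^(1+α)) := by
      have hP : (0:ℝ) < (t:ℝ)*((t:ℝ)-1) := by nlinarith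
      have h1 : E * ((m-(K+2)).choose (t-2) : ℝ) * ((t:ℝ)*((t:ℝ)-1))
          ≤ (m:ℝ)*((m:ℝ)-1)*((m-2).choose (t-2) : ℝ) * ((d/2) * (t:ℝ)^(1+α)) := by
        have h0 := mul_le_mul_of_nonneg_right hN1 hP.le
        calc E * ((m-(K+2)).choose (t-2) : ℝ) * ((t:ℝ)*((t:ℝ)-1))
            ≤ (m.choose t : ℝ) * ((d/2) * (t:ℝ)^(1+α)) * ((t:ℝ)*((t:ℝ)-1)) := h0
          _ = (m.choose t : ℝ) * ((t:ℝ)*((t:ℝ)-1)) * ((d/2) * (t:ℝ)^(1+α)) := by ring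
          _ = (m:ℝ)*((m:ℝ)-1)*((m-2).choose (t-2) : ℝ) * ((d/2) * (t:ℝ)^(1+α)) := by rw [hN2]
      have h2 : (m:ℝ)*((m:ℝ)-1)*((m-2).choose (t-2) : ℝ)
          ≤ (m:ℝ)*((m:ℝ)-1)*(Real.exp 2 * ((m-(K+2)).choose (t-2))) := by
        refine mul_le_mul_of_nonneg_left hN3 ?_
        nlinarith
      have h3 : E * ((m-(K+2)).choose (t-2) : ℝ) * ((t:ℝ)*((t:ℝ)-1))
          ≤ (m:ℝ)*((m:ℝ)-1)*(Real.exp 2 * ((m-(K+2)).choose (t-2))) * ((d/2) * (t:ℝ)^(1+α)) := by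
        calc E * ((m-(K+2)).choose (t-2) : ℝ) * ((t:ℝ)*((t:ℝ)-1))
            ≤ (m:ℝ)*((m:ℝ)-1)*((m-2).choose (t-2) : ℝ) * ((d/2) * (t:ℝ)^(1+α)) := h1
          _ ≤ _ := by
              refine mul_le_mul_of_nonneg_right h2 ?_
              positivity
      have h4 : E * ((t:ℝ)*((t:ℝ)-1)) * (((m-(K+2)).choose (t-2)) : ℝ)
          ≤ Real.exp 2 * ((m:ℝ)*((m:ℝ)-1)) * ((d/2) * (t:ℝ)^(1+α)) * (((m-(K+2)).choose (t-2)) : ℝ) := by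
        calc E * ((t:ℝ)*((t:ℝ)-1)) * (((m-(K+2)).choose (t-2)) : ℝ)
            = E * ((m-(K+2)).choose (t-2) : ℝ) * ((t:ℝ)*((t:ℝ)-1)) := by ring
          _ ≤ (m:ℝ)*((m:ℝ)-1)*(Real.exp 2 * ((m-(K+2)).choose (t-2))) * ((d/2) * (t:ℝ)^(1+α)) := h3
          _ = Real.exp 2 * ((m:ℝ)*((m:ℝ)-1)) * ((d/2) * (t:ℝ)^(1+α)) * (((m-(K+2)).choose (t-2)) : ℝ) := by ring
      exact le_of_mul_le_mul_right h4 hCbpos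
    -- final estimate
    have hfin : Real.exp 2 * ((m:ℝ)*((m:ℝ)-1)) * ((d/2) * (t:ℝ)^(1+α))
        ≤ (K+1)*(15*d+2) * (m:ℝ)^(1+α) * ((t:ℝ)*((t:ℝ)-1)) := by
      rw [htα, hmα]
      have hmα0 : (0:ℝ) ≤ (m:ℝ)^α := by positivity
      have htα0 : (0:ℝ) ≤ (t:ℝ)^α := by positivity
      -- (t-1)*(K+1) ≥ (3/5) m
      have hkey : (3/5)*(m:ℝ) ≤ ((t:ℝ)-1)*((K:ℝ)+1) := by nlinarith
      have hstep1 : (d/2)*Real.exp 2*((m:ℝ)-1) ≤ (K+1)*(15*d+2)*((t:ℝ)-1) := by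
        have h5 : (15*d+2)*((3/5)*(m:ℝ)) ≤ (15*d+2)*(((t:ℝ)-1)*((K:ℝ)+1)) :=
          mul_le_mul_of_nonneg_left hkey (by linarith)
        have h6 : (0:ℝ) ≤ (d/2)*((m:ℝ)-1) :=
          mul_nonneg (by linarith) (by linarith)
        have h7 := mul_le_mul_of_nonneg_left he2.le h6
        have h8 : (0:ℝ) ≤ d*(m:ℝ) := mul_nonneg hd.le (by linarith)
        nlinarith [h5, h7, h8, hd.le, hm1r]
      have w1 : (0:ℝ) ≤ (K:ℝ)+1 := by linarith
      have w2 : (0:ℝ) ≤ 15*d+2 := by linarith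
      have w3 : (0:ℝ) ≤ (t:ℝ)*((t:ℝ)-1) := by nlinarith
      have w4 : (0:ℝ) ≤ (m:ℝ) := by positivity
      calc Real.exp 2 * ((m:ℝ)*((m:ℝ)-1)) * ((d/2) * ((t:ℝ) * (t:ℝ)^α))
          = ((d/2)*Real.exp 2*((m:ℝ)-1)) * ((m:ℝ)*(t:ℝ)*(t:ℝ)^α) := by ring
        _ ≤ ((K+1)*(15*d+2)*((t:ℝ)-1)) * ((m:ℝ)*(t:ℝ)*(t:ℝ)^α) := by
            refine mul_le_mul_of_nonneg_right hstep1 ?_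
            have := htpos
            positivity
        _ = ((K+1)*(15*d+2)*((t:ℝ)*((t:ℝ)-1))*(m:ℝ)) * (t:ℝ)^α := by ring
        _ ≤ ((K+1)*(15*d+2)*((t:ℝ)*((t:ℝ)-1))*(m:ℝ)) * (m:ℝ)^α := by
            refine mul_le_mul_of_nonneg_left htm' ?_
            exact mul_nonneg (mul_nonneg (mul_nonneg w1 w2) w3) w4
        _ = (K+1)*(15*d+2) * ((m:ℝ) * (m:ℝ)^α) * ((t:ℝ)*((t:ℝ)-1)) := by ring
    have hP : (0:ℝ) < (t:ℝ)*((t:ℝ)-1) := by nlinarith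
    have := le_trans hstep hfin
    exact le_of_mul_le_mul_right this hP


lemma exists_min_deg (hd : 0 < d) (hα0 : 0 ≤ α) (hα1 : α ≤ 1)
    (hH : ∀ V' : Finset ι, (((GkOn 0 R ↑V').edgeSet).ncard : ℝ) ≤ (d/2) * (V'.card:ℝ)^(1+α))
    {K : ℕ} (hK : 1 ≤ K) {V : Finset ι} (hV : V.Nonempty) :
    ∃ r ∈ V, (((GkOn K R ↑V).degree r : ℕ) : ℝ) ≤ 2*((K:ℝ)+1)*(15*d+2)*(V.card:ℝ)^α := by
  classical
  obtain ⟨r, hrV, hmin⟩ := Finset.exists_min_image V (fun r => (GkOn K R ↑V).degree r) hV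
  refine ⟨r, hrV, ?_⟩
  have hm0 : 0 < V.card := Finset.card_pos.2 hV
  have hm0r : (0:ℝ) < (V.card:ℝ) := by exact_mod_cast hm0
  have hsum : V.card * ((GkOn K R ↑V).degree r) ≤ 2 * (GkOn K R ↑V).edgeFinset.card := by
    rw [← sum_deg R K V]
    calc V.card * ((GkOn K R ↑V).degree r) = ∑ _s ∈ V, (GkOn K R ↑V).degree r := by
          rw [Finset.sum_const, smul_eq_mul]
      _ ≤ ∑ s ∈ V, (GkOn K R ↑V).degree s := Finset.sum_le_sum (fun s hs => hmin s hs)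
  have hsumr : (V.card:ℝ) * (((GkOn K R ↑V).degree r : ℕ):ℝ)
      ≤ 2 * (((K:ℝ)+1)*(15*d+2) * (V.card:ℝ)^(1+α)) := by
    have h1 : ((V.card * ((GkOn K R ↑V).degree r) : ℕ):ℝ)
        ≤ ((2 * (GkOn K R ↑V).edgeFinset.card : ℕ):ℝ) := by exact_mod_cast hsum
    push_cast at h1
    have h2 := sparse_GK R d α hd hα0 hα1 hH hK V
    linarith
  have hadd : (V.card:ℝ)^(1+α) = (V.card:ℝ) * (V.card:ℝ)^α := by
    rw [Real.rpow_add hm0r, Real.rpow_one]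
  rw [hadd] at hsumr
  have h9 : (V.card:ℝ) * (((GkOn K R ↑V).degree r : ℕ):ℝ)
      ≤ (V.card:ℝ) * (2*((K:ℝ)+1)*(15*d+2)*(V.card:ℝ)^α) := by
    calc (V.card:ℝ) * (((GkOn K R ↑V).degree r : ℕ):ℝ) ≤ _ := hsumr
      _ = (V.card:ℝ) * (2*((K:ℝ)+1)*(15*d+2)*(V.card:ℝ)^α) := by ring
  exact le_of_mul_le_mul_left h9 hm0r

lemma eVF_erase (V : Finset ι) (r : ι) (p : ℝ × ℝ) :
    eVF R (V.erase r) p = (eVF R V p).erase r := by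
  ext u
  simp only [mem_eVF, Finset.mem_erase]
  tauto

lemma colorful (hd : 0 < d) (hα0 : 0 ≤ α) (hα1 : α ≤ 1)
    (hH : ∀ V' : Finset ι, (((GkOn 0 R ↑V').edgeSet).ncard : ℝ) ≤ (d/2) * (V'.card:ℝ)^(1+α))
    {K : ℕ} (hK : 1 ≤ K) :
    ∀ (n : ℕ) (V : Finset ι), V.card ≤ n →
    ∃ χ : ι → ℕ, (∀ r ∈ V, (χ r : ℝ) ≤ 2*((K:ℝ)+1)*(15*d+2)*(V.card:ℝ)^α) ∧
      ∀ p : ℝ × ℝ,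
        ((eVF R V p).card ≤ K+2 → Set.InjOn χ ↑(eVF R V p)) ∧
        (K+3 ≤ (eVF R V p).card → K+2 ≤ ((eVF R V p).image χ).card) := by
  classical
  intro n
  induction n with
  | zero =>
    intro V hV
    have : V = ∅ := Finset.card_eq_zero.1 (by omega)
    subst this
    refine ⟨fun _ => 0, by simp, fun p => ⟨fun _ => ?_, fun h => ?_⟩⟩
    · have : eVF R (∅ : Finset ι) p = ∅ := by
        ext u; simp [mem_eVF]
      rw [this]; simp
    · have : eVF R (∅ : Finset ι) p = ∅ := by
        ext u; simp [mem_eVF]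
      rw [this] at h; simp at h
  | succ n ih =>
    intro V hV
    rcases Finset.eq_empty_or_nonempty V with rfl | hVne
    · refine ⟨fun _ => 0, by simp, fun p => ⟨fun _ => ?_, fun h => ?_⟩⟩
      · have : eVF R (∅ : Finset ι) p = ∅ := by ext u; simp [mem_eVF]
        rw [this]; simp
      · have : eVF R (∅ : Finset ι) p = ∅ := by ext u; simp [mem_eVF]
        rw [this] at h; simp at h
    obtain ⟨r, hrV, hdeg⟩ := exists_min_deg R d α hd hα0 hα1 hH hK hVne
    set V' := V.erase r with hV'
    have hV'card : V'.card ≤ n := by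
      rw [hV', Finset.card_erase_of_mem hrV]
      have := Finset.card_pos.2 hVne
      omega
    obtain ⟨χ', hχ'bd, hχ'col⟩ := ih V' hV'card
    set N : Finset ℕ := ((GkOn K R ↑V).neighborFinset r).image χ' with hN
    have hc : ∃ c, c ∉ N ∧ c ≤ N.card := by
      by_contra hcon
      push_neg at hcon
      have hsub : Finset.range (N.card + 1) ⊆ N := by
        intro c hc
        rcases Finset.mem_range.1 hc with h
        by_contra hnc
        exact absurd (hcon c hnc) (by omega)
      have := Finset.card_le_card hsub
      rw [Finset.card_range] at this
      omega
    obtain ⟨c, hcN, hcle⟩ := hc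
    set χ : ι → ℕ := Function.update χ' r c with hχ
    have hχr : χ r = c := Function.update_self r c χ'
    have hχs : ∀ s, s ≠ r → χ s = χ' s := fun s hs => Function.update_of_ne hs c χ'
    have hbd : ∀ s ∈ V, (χ s : ℝ) ≤ 2*((K:ℝ)+1)*(15*d+2)*(V.card:ℝ)^α := by
      intro s hsV
      by_cases hsr : s = r
      · rw [hsr, hχr]
        have h1 : (c:ℝ) ≤ (N.card : ℝ) := by exact_mod_cast hcle
        have h2 : (N.card : ℝ) ≤ (((GkOn K R ↑V).degree r : ℕ):ℝ) := by
          exact_mod_cast Finset.card_image_le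
        calc (c:ℝ) ≤ _ := h1
          _ ≤ _ := h2
          _ ≤ _ := hdeg
      · rw [hχs s hsr]
        have hsV' : s ∈ V' := Finset.mem_erase.2 ⟨hsr, hsV⟩
        calc (χ' s : ℝ) ≤ 2*((K:ℝ)+1)*(15*d+2)*(V'.card:ℝ)^α := hχ'bd s hsV'
          _ ≤ 2*((K:ℝ)+1)*(15*d+2)*(V.card:ℝ)^α := by
            have hmono : (V'.card:ℝ)^α ≤ (V.card:ℝ)^α := by
              refine Real.rpow_le_rpow (by positivity) ?_ hα0
              exact_mod_cast Finset.card_le_card (Finset.erase_subset r V)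
            have hnn : (0:ℝ) ≤ 2*((K:ℝ)+1)*(15*d+2) := by positivity
            exact mul_le_mul_of_nonneg_left hmono hnn
    refine ⟨χ, hbd, fun p => ?_⟩
    have herase : eVF R V' p = (eVF R V p).erase r := eVF_erase R V r p
    obtain ⟨hcol1', hcol2'⟩ := hχ'col p
    by_cases hre : r ∈ eVF R V p
    · -- r in the hyperedge
      have hcard' : (eVF R V' p).card = (eVF R V p).card - 1 := by
        rw [herase, Finset.card_erase_of_mem hre]
      have hχagree : ∀ u ∈ eVF R V' p, χ u = χ' u := by
        intro u hu
        rw [herase] at hu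
        exact hχs u (Finset.mem_erase.1 hu).1
      constructor
      · intro hsz
        have hinj' : Set.InjOn χ' ↑(eVF R V' p) := hcol1' (by omega)
        have hne : ∀ s ∈ eVF R V' p, χ s ≠ χ r := by
          intro s hs
          rw [herase] at hs
          obtain ⟨hsr, hsmem⟩ := Finset.mem_erase.1 hs
          have hadj : (GkOn K R ↑V).Adj r s := adj_of_point R (fun h => hsr h.symm) hre hsmem hsz
          have : χ' s ∈ N := Finset.mem_image_of_mem χ' ((SimpleGraph.mem_neighborFinset _ _ _).2 hadj)
          rw [hχs s hsr, hχr]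
          exact fun hcontr => hcN (hcontr ▸ this)
        intro x hx y hy hxy
        simp only [Finset.mem_coe] at hx hy
        by_cases hxr : x = r
        · by_cases hyr : y = r
          · rw [hxr, hyr]
          · exfalso
            have hy' : y ∈ eVF R V' p := by
              rw [herase]; exact Finset.mem_erase.2 ⟨hyr, hy⟩
            exact hne y hy' (by rw [← hxy, hxr])
        · by_cases hyr : y = r
          · exfalso
            have hx' : x ∈ eVF R V' p := by
              rw [herase]; exact Finset.mem_erase.2 ⟨hxr, hx⟩
            exact hne x hx' (by rw [hxy, hyr])
          · have hx' : x ∈ eVF R V' p := by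
              rw [herase]; exact Finset.mem_erase.2 ⟨hxr, hx⟩
            have hy' : y ∈ eVF R V' p := by
              rw [herase]; exact Finset.mem_erase.2 ⟨hyr, hy⟩
            refine hinj' (Finset.mem_coe.2 hx') (Finset.mem_coe.2 hy') ?_
            rw [← hχagree x hx', ← hχagree y hy', hxy]
      · intro hsz
        have h1 : K+2 ≤ ((eVF R V' p).image χ').card := by
          by_cases hsmall : (eVF R V' p).card ≤ K+2
          · have hinj' : Set.InjOn χ' ↑(eVF R V' p) := hcol1' hsmall
            rw [Finset.card_image_of_injOn hinj']
            omega
          · exact hcol2' (by omega)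
        have h2 : (eVF R V' p).image χ' = (eVF R V' p).image χ :=
          (Finset.image_congr (fun u hu => (hχagree u hu).symm))
        have h3 : (eVF R V' p).image χ ⊆ (eVF R V p).image χ := by
          refine Finset.image_subset_image ?_
          rw [herase]
          exact Finset.erase_subset r _
        calc K+2 ≤ ((eVF R V' p).image χ').card := h1
          _ = ((eVF R V' p).image χ).card := by rw [h2]
          _ ≤ ((eVF R V p).image χ).card := Finset.card_le_card h3
    · -- r not in the hyperedge
      have heq : eVF R V' p = eVF R V p := by
        rw [herase]
        exact Finset.erase_eq_of_notMem hre
      have hχagree : ∀ u ∈ eVF R V p, χ u = χ' u := by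
        intro u hu
        exact hχs u (fun h => hre (h ▸ hu))
      constructor
      · intro hsz
        have hinj' : Set.InjOn χ' ↑(eVF R V' p) := hcol1' (by rw [heq]; omega)
        rw [heq] at hinj'
        intro x hx y hy hxy
        refine hinj' hx hy ?_
        rw [← hχagree x hx, ← hχagree y hy, hxy]
      · intro hsz
        have h1 : K+2 ≤ ((eVF R V' p).image χ').card := hcol2' (by rw [heq]; omega)
        rw [heq] at h1
        have h2 : (eVF R V p).image χ' = (eVF R V p).image χ :=
          Finset.image_congr (fun u hu => (hχagree u hu).symm)
        rw [h2] at h1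
        exact h1


lemma eVF_sdiff (V I : Finset ι) (p : ℝ × ℝ) :
    eVF R (V \ I) p = (eVF R V p) \ I := by
  ext u
  simp only [mem_eVF, Finset.mem_sdiff]
  tauto

lemma select (hd : 0 < d) (hα0 : 0 ≤ α) (hα1 : α ≤ 1)
    (hH : ∀ V' : Finset ι, (((GkOn 0 R ↑V').edgeSet).ncard : ℝ) ≤ (d/2) * (V'.card:ℝ)^(1+α))
    {K : ℕ} (hK : 1 ≤ K) {V : Finset ι} (hV : V.Nonempty) :
    ∃ I : Finset ι, I ⊆ V ∧ I.Nonempty ∧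
      ((V.card : ℝ) ≤ (I.card : ℝ) * (2*((K:ℝ)+1)*(15*d+2)*(V.card:ℝ)^α + 1)) ∧
      (∀ p, (eVF R V p).card ≤ K+2 → ((eVF R V p) ∩ I).card ≤ 1) ∧
      (∀ p, K+3 ≤ (eVF R V p).card → K+1 ≤ ((eVF R V p) \ I).card) := by
  classical
  obtain ⟨χ, hbd, hcol⟩ := colorful R d α hd hα0 hα1 hH hK V.card V le_rfl
  set D : ℝ := 2*((K:ℝ)+1)*(15*d+2)*(V.card:ℝ)^α with hD
  have hD0 : 0 ≤ D := by positivity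
  set M : ℕ := ⌊D⌋₊ with hM
  have hχM : ∀ r ∈ V, χ r < M + 1 := by
    intro r hr
    have := Nat.le_floor (hbd r hr)
    omega
  have hpart : V.card = ∑ c ∈ Finset.range (M+1), (V.filter (fun r => χ r = c)).card :=
    Finset.card_eq_sum_card_fiberwise (fun r hr => Finset.mem_range.2 (hχM r hr))
  obtain ⟨c0, hc0mem, hc0max⟩ := Finset.exists_max_image (Finset.range (M+1))
    (fun c => (V.filter (fun r => χ r = c)).card) ⟨0, Finset.mem_range.2 (by omega)⟩
  set I : Finset ι := V.filter (fun r => χ r = c0) with hI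
  have hIV : I ⊆ V := Finset.filter_subset _ _
  have hsize : V.card ≤ (M+1) * I.card := by
    calc V.card = ∑ c ∈ Finset.range (M+1), (V.filter (fun r => χ r = c)).card := hpart
      _ ≤ (Finset.range (M+1)).card * I.card := by
          refine Finset.sum_le_card_nsmul _ _ _ ?_
          intro c hc
          exact hc0max c hc
      _ = (M+1) * I.card := by rw [Finset.card_range]
  have hIne : I.Nonempty := by
    rw [← Finset.card_pos]
    by_contra hcon
    push_neg at hcon
    have : I.card = 0 := by omega
    rw [this, Nat.mul_zero] at hsize
    have := Finset.card_pos.2 hV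
    omega
  refine ⟨I, hIV, hIne, ?_, ?_, ?_⟩
  · have h1 : (V.card : ℝ) ≤ ((M:ℝ)+1) * (I.card:ℝ) := by
      have := hsize
      exact_mod_cast this
    have h2 : (M:ℝ) ≤ D := Nat.floor_le hD0
    calc (V.card : ℝ) ≤ ((M:ℝ)+1) * (I.card:ℝ) := h1
      _ ≤ (D+1) * (I.card:ℝ) := by
          refine mul_le_mul_of_nonneg_right (by linarith) (Nat.cast_nonneg _)
      _ = (I.card : ℝ) * (D + 1) := by ring
  · intro p hsz
    have hinj := (hcol p).1 hsz
    rw [Finset.card_le_one]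
    intro a ha b hb
    rw [Finset.mem_inter] at ha hb
    have ha' : χ a = c0 := (Finset.mem_filter.1 ha.2).2
    have hb' : χ b = c0 := (Finset.mem_filter.1 hb.2).2
    exact hinj (Finset.mem_coe.2 ha.1) (Finset.mem_coe.2 hb.1) (by rw [ha', hb'])
  · intro p hsz
    have himg := (hcol p).2 hsz
    have hsub : ((eVF R V p).image χ).erase c0 ⊆ ((eVF R V p) \ I).image χ := by
      intro cc hcc
      obtain ⟨hccne, hccmem⟩ := Finset.mem_erase.1 hcc
      obtain ⟨u, hu, hucc⟩ := Finset.mem_image.1 hccmem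
      refine Finset.mem_image.2 ⟨u, ?_, hucc⟩
      refine Finset.mem_sdiff.2 ⟨hu, ?_⟩
      intro huI
      exact hccne (by rw [← hucc, (Finset.mem_filter.1 huI).2])
    calc K+1 ≤ ((eVF R V p).image χ).card - 1 := by omega
      _ ≤ (((eVF R V p).image χ).erase c0).card := by
          by_cases hc0i : c0 ∈ (eVF R V p).image χ
          · rw [Finset.card_erase_of_mem hc0i]
          · rw [Finset.erase_eq_of_notMem hc0i]
            omega
      _ ≤ (((eVF R V p) \ I).image χ).card := Finset.card_le_card hsub
      _ ≤ ((eVF R V p) \ I).card := Finset.card_image_le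

lemma outer (hd : 0 < d) (hα0 : 0 ≤ α) (hα1 : α ≤ 1)
    (hH : ∀ V' : Finset ι, (((GkOn 0 R ↑V').edgeSet).ncard : ℝ) ≤ (d/2) * (V'.card:ℝ)^(1+α))
    {K : ℕ} (hK : 1 ≤ K) (F : ℕ → ℝ) (hF0 : 0 ≤ F 0)
    (hFstep : ∀ m' m : ℕ, 0 < m → m' ≤ m →
      ((m':ℝ) ≤ (m:ℝ) - (m:ℝ)/(2*((K:ℝ)+1)*(15*d+2)*(m:ℝ)^α + 1)) → F m' + 1 ≤ F m) :
    ∀ (n : ℕ) (V : Finset ι), V.card ≤ n →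
    ∃ (φ : ι → ℕ) (L : ℕ), (∀ r ∈ V, φ r < L) ∧ ((L:ℝ) ≤ F V.card) ∧
      ∀ p : ℝ × ℝ,
        (min ((eVF R V p).card) (K+1) ≤
          ((eVF R V p).filter (fun i => ∀ j ∈ eVF R V p, φ j = φ i → j = i)).card) ∧
        ((eVF R V p).card ≤ K+2 → Set.InjOn φ ↑(eVF R V p)) := by
  classical
  intro n
  induction n with
  | zero =>
    intro V hV
    have hVe : V = ∅ := Finset.card_eq_zero.1 (by omega)
    subst hVe
    refine ⟨fun _ => 0, 0, by simp, by simpa using hF0, fun p => ?_⟩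
    have he : eVF R (∅ : Finset ι) p = ∅ := by ext u; simp [mem_eVF]
    rw [he]
    simp
  | succ n ih =>
    intro V hV
    rcases Finset.eq_empty_or_nonempty V with rfl | hVne
    · refine ⟨fun _ => 0, 0, by simp, by simpa using hF0, fun p => ?_⟩
      have he : eVF R (∅ : Finset ι) p = ∅ := by ext u; simp [mem_eVF]
      rw [he]
      simp
    obtain ⟨I, hIV, hIne, hIsize, hsel1, hsel2⟩ := select R d α hd hα0 hα1 hH hK hVne
    set V' : Finset ι := V \ I with hV'
    have hV'sub : V' ⊆ V := Finset.sdiff_subset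
    have hIcard : 0 < I.card := Finset.card_pos.2 hIne
    have hV'card : V'.card = V.card - I.card := by
      rw [hV', Finset.card_sdiff_of_subset hIV]
    have hV'lt : V'.card < V.card := by
      have := Finset.card_le_card hIV
      omega
    have hV'n : V'.card ≤ n := by omega
    obtain ⟨φ', L', hφ'lt, hL'le, hφ'col⟩ := ih V' hV'n
    set φ : ι → ℕ := fun x => if x ∈ I then L' else φ' x with hφ
    refine ⟨φ, L'+1, ?_, ?_, ?_⟩
    · intro r hr
      by_cases hrI : r ∈ I
      · simp only [hφ, if_pos hrI]
        omega
      · simp only [hφ, if_neg hrI]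
        have : r ∈ V' := Finset.mem_sdiff.2 ⟨hr, hrI⟩
        have := hφ'lt r this
        omega
    · -- level bound
      have hstep : F V'.card + 1 ≤ F V.card := by
        refine hFstep V'.card V.card (Finset.card_pos.2 hVne) (le_of_lt hV'lt) ?_
        have hA : (0:ℝ) < 2*((K:ℝ)+1)*(15*d+2)*(V.card:ℝ)^α + 1 := by positivity
        have hIge : (V.card:ℝ)/(2*((K:ℝ)+1)*(15*d+2)*(V.card:ℝ)^α + 1) ≤ (I.card:ℝ) := by
          rw [div_le_iff₀ hA]
          linarith [hIsize]
        have hc : (V'.card : ℝ) = (V.card:ℝ) - (I.card:ℝ) := by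
          rw [hV'card]
          have := Finset.card_le_card hIV
          push_cast [Nat.cast_sub this]
          ring
        linarith
      push_cast
      linarith
    · intro p
      set e : Finset ι := eVF R V p with he
      have he' : eVF R V' p = e \ I := by rw [hV', eVF_sdiff]
      obtain ⟨hcol1', hcol2'⟩ := hφ'col p
      rw [he'] at hcol1' hcol2'
      have hsubtrans : ∀ x ∈ (e \ I).filter
          (fun i => ∀ j ∈ e \ I, φ' j = φ' i → j = i),
          x ∈ e.filter (fun i => ∀ j ∈ e, φ j = φ i → j = i) := by
        intro x hx
        obtain ⟨hxe', hxuniq⟩ := Finset.mem_filter.1 hx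
        obtain ⟨hxe, hxI⟩ := Finset.mem_sdiff.1 hxe'
        refine Finset.mem_filter.2 ⟨hxe, ?_⟩
        intro j hj hφj
        have hφx : φ x = φ' x := by simp only [hφ, if_neg hxI]
        have hφ'x : φ' x < L' := hφ'lt x (Finset.mem_sdiff.2 ⟨(mem_eVF R).1 hxe |>.1, hxI⟩)
        by_cases hjI : j ∈ I
        · exfalso
          have : φ j = L' := by simp only [hφ, if_pos hjI]
          rw [this, hφx] at hφj
          omega
        · have hje' : j ∈ e \ I := Finset.mem_sdiff.2 ⟨hj, hjI⟩
          have : φ j = φ' j := by simp only [hφ, if_neg hjI]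
          exact hxuniq j hje' (by rw [← this, hφj, hφx])
      by_cases hbig : K+3 ≤ e.card
      · constructor
        · have hb := hsel2 p hbig
          rw [← he] at hb
          have hmin' : min ((e \ I).card) (K+1) = K+1 := by omega
          have h1 := hcol1'
          rw [hmin'] at h1
          have h2 : ((e \ I).filter (fun i => ∀ j ∈ e \ I, φ' j = φ' i → j = i)).card ≤
              (e.filter (fun i => ∀ j ∈ e, φ j = φ i → j = i)).card := by
            refine Finset.card_le_card ?_
            intro x hx
            exact hsubtrans x hx
          have : min (e.card) (K+1) = K+1 := by omega
          rw [this]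
          omega
        · intro hsz
          exact absurd hsz (by omega)
      · -- small hyperedge
        push_neg at hbig
        have hsmall : e.card ≤ K+2 := by omega
        have hinter := hsel1 p (by rw [← he] at *; exact hsmall)
        rw [← he] at hinter
        have hinj' : Set.InjOn φ' ↑(e \ I) := hcol2' (le_trans (Finset.card_le_card (Finset.sdiff_subset)) hsmall)
        have hinj : Set.InjOn φ ↑e := by
          intro x hx y hy hxy
          simp only [Finset.mem_coe] at hx hy
          by_cases hxI : x ∈ I
          · by_cases hyI : y ∈ I
            · exact Finset.card_le_one.1 hinter x (Finset.mem_inter.2 ⟨hx, hxI⟩)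
                y (Finset.mem_inter.2 ⟨hy, hyI⟩)
            · exfalso
              have h1 : φ x = L' := by simp only [hφ, if_pos hxI]
              have h2 : φ y = φ' y := by simp only [hφ, if_neg hyI]
              have h3 : φ' y < L' := hφ'lt y (Finset.mem_sdiff.2 ⟨(mem_eVF R).1 hy |>.1, hyI⟩)
              omega
          · by_cases hyI : y ∈ I
            · exfalso
              have h1 : φ y = L' := by simp only [hφ, if_pos hyI]
              have h2 : φ x = φ' x := by simp only [hφ, if_neg hxI]
              have h3 : φ' x < L' := hφ'lt x (Finset.mem_sdiff.2 ⟨(mem_eVF R).1 hx |>.1, hxI⟩)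
              omega
            · have h1 : φ x = φ' x := by simp only [hφ, if_neg hxI]
              have h2 : φ y = φ' y := by simp only [hφ, if_neg hyI]
              refine hinj' ?_ ?_ (by rw [← h1, ← h2, hxy])
              · exact Finset.mem_coe.2 (Finset.mem_sdiff.2 ⟨hx, hxI⟩)
              · exact Finset.mem_coe.2 (Finset.mem_sdiff.2 ⟨hy, hyI⟩)
        constructor
        · have hfeq : e.filter (fun i => ∀ j ∈ e, φ j = φ i → j = i) = e := by
            refine Finset.filter_true_of_mem ?_
            intro i hi j hj hφij
            exact hinj (Finset.mem_coe.2 hj) (Finset.mem_coe.2 hi) hφij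
          rw [hfeq]
          omega
        · intro _
          exact hinj

lemma scf_main {K : ℕ} (φ : ι → ℕ)
    (hcol : ∀ p : ℝ × ℝ,
      (min ((eVF R Finset.univ p).card) (K+1) ≤
        ((eVF R Finset.univ p).filter
          (fun i => ∀ j ∈ eVF R Finset.univ p, φ j = φ i → j = i)).card) ∧
      ((eVF R Finset.univ p).card ≤ K+2 → Set.InjOn φ ↑(eVF R Finset.univ p))) :
    IsSCFRegions K R φ := by
  intro p
  have hset : hyperedge R p = ↑(eVF R Finset.univ p) := by
    ext i; simp [hyperedge, mem_eVF]
  have hcard : (hyperedge R p).ncard = (eVF R Finset.univ p).card := by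
    rw [hset, Set.ncard_coe_finset]
  obtain ⟨h1, h2⟩ := hcol p
  constructor
  · intro hge
    rw [hcard] at hge
    set U := (eVF R Finset.univ p).filter
      (fun i => ∀ j ∈ eVF R Finset.univ p, φ j = φ i → j = i) with hU
    have hUK : K ≤ U.card := by
      have : K ≤ min ((eVF R Finset.univ p).card) (K+1) := le_min hge (by omega)
      omega
    obtain ⟨S', hS'U, hS'card⟩ := Finset.exists_subset_card_eq hUK
    refine ⟨↑S', ?_, ?_, ?_⟩
    · rw [hset]
      exact Finset.coe_subset.2 (hS'U.trans (Finset.filter_subset _ _))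
    · rw [Set.ncard_coe_finset]
      exact hS'card
    · intro i hi j hj hij
      have hiU := hS'U (Finset.mem_coe.1 hi)
      have hprop := (Finset.mem_filter.1 hiU).2
      rw [hset] at hj
      exact hprop j (Finset.mem_coe.1 hj) hij
  · intro hlt
    rw [hcard] at hlt
    rw [hset]
    exact h2 (by omega)

end XX

noncomputable def F0fun (A : ℝ) : ℕ → ℝ := fun m => if m = 0 then 0 else (A+1)*Real.log m + 1

lemma F0_step (A : ℝ) (hA : 0 < A) {m' m : ℕ} (h0 : 0 < m) (hle : m' ≤ m)
    (hm' : (m':ℝ) ≤ (m:ℝ) - (m:ℝ)/(A+1)) : F0fun A m' + 1 ≤ F0fun A m := by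
  have hmr : (1:ℝ) ≤ (m:ℝ) := by exact_mod_cast h0
  have hlog : 0 ≤ Real.log m := Real.log_nonneg hmr
  by_cases hm'0 : m' = 0
  · simp only [F0fun, hm'0, if_neg (by omega : m ≠ 0)]
    norm_num
    exact mul_nonneg (by linarith) hlog
  · simp only [F0fun, if_neg hm'0, if_neg (by omega : m ≠ 0)]
    have hm'1 : (1:ℝ) ≤ (m':ℝ) := by exact_mod_cast Nat.one_le_iff_ne_zero.2 hm'0
    have hA1 : (0:ℝ) < A + 1 := by linarith
    have hexp : 1 - 1/(A+1) ≤ Real.exp (-(1/(A+1))) := by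
      have := Real.add_one_le_exp (-(1/(A+1)))
      linarith
    have h1 : (m':ℝ) ≤ (m:ℝ) * Real.exp (-(1/(A+1))) := by
      calc (m':ℝ) ≤ (m:ℝ) - (m:ℝ)/(A+1) := hm'
        _ = (m:ℝ) * (1 - 1/(A+1)) := by field_simp
        _ ≤ (m:ℝ) * Real.exp (-(1/(A+1))) := by
            exact mul_le_mul_of_nonneg_left hexp (by linarith)
    have h2 : Real.log m' ≤ Real.log m - 1/(A+1) := by
      have := Real.log_le_log (by linarith : (0:ℝ) < (m':ℝ)) h1
      rw [Real.log_mul (by linarith) (Real.exp_ne_zero _), Real.log_exp] at this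
      linarith
    have h3 : (A+1) * Real.log m' + 1 ≤ (A+1) * Real.log m := by
      have := mul_le_mul_of_nonneg_left h2 hA1.le
      have hc : (A+1) * (1/(A+1)) = 1 := by field_simp
      nlinarith
    linarith

noncomputable def F1fun (A α : ℝ) : ℕ → ℝ :=
  fun m => if m = 0 then 0 else (A/α)*(m:ℝ)^α + Real.log m + 1

lemma F1_step (A α : ℝ) (hA : 0 < A) (hα : 0 < α) (hα1 : α ≤ 1) {m' m : ℕ}
    (h0 : 0 < m) (hle : m' ≤ m)
    (hm' : (m':ℝ) ≤ (m:ℝ) - (m:ℝ)/(A*(m:ℝ)^α + 1)) :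
    F1fun A α m' + 1 ≤ F1fun A α m := by
  have hmr : (1:ℝ) ≤ (m:ℝ) := by exact_mod_cast h0
  have hmpos : (0:ℝ) < (m:ℝ) := by linarith
  have hlog : 0 ≤ Real.log m := Real.log_nonneg hmr
  have hmα : (0:ℝ) < (m:ℝ)^α := Real.rpow_pos_of_pos hmpos α
  have hAm : (0:ℝ) < A*(m:ℝ)^α + 1 := by positivity
  by_cases hm'0 : m' = 0
  · simp only [F1fun, hm'0, if_neg (by omega : m ≠ 0)]
    norm_num
    have : 0 ≤ (A/α)*(m:ℝ)^α := by positivity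
    linarith
  · simp only [F1fun, if_neg hm'0, if_neg (by omega : m ≠ 0)]
    have hm'1 : (1:ℝ) ≤ (m':ℝ) := by exact_mod_cast Nat.one_le_iff_ne_zero.2 hm'0
    have hm'pos : (0:ℝ) < (m':ℝ) := by linarith
    -- log part
    have hlog1 : ((m:ℝ) - m')/(m:ℝ) ≤ Real.log m - Real.log m' := by
      have hq : (0:ℝ) < (m':ℝ)/(m:ℝ) := by positivity
      have := Real.log_le_sub_one_of_pos hq
      rw [Real.log_div (by linarith) (by linarith)] at this
      have h2 : (m':ℝ)/(m:ℝ) - 1 = ((m':ℝ) - m)/(m:ℝ) := by field_simp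
      rw [h2] at this
      have h3 : ((m':ℝ) - m)/(m:ℝ) = -(((m:ℝ) - m')/(m:ℝ)) := by ring
      rw [h3] at this
      linarith
    -- rpow part : m^α - m'^α ≥ α * m^α * (m - m')/m
    have hrpow : α * (m:ℝ)^α * (((m:ℝ) - m')/(m:ℝ)) ≤ (m:ℝ)^α - (m':ℝ)^α := by
      set t : ℝ := (m':ℝ)/(m:ℝ) with ht
      have ht0 : 0 ≤ t := by positivity
      have ht1 : t ≤ 1 := by
        rw [ht, div_le_one hmpos]
        exact_mod_cast hle
      have hgm : t^α * 1^(1-α) ≤ α * t + (1-α) * 1 :=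
        Real.geom_mean_le_arith_mean2_weighted hα.le (by linarith) ht0 (by norm_num)
          (by ring)
      rw [Real.one_rpow] at hgm
      have htα : (m':ℝ)^α = t^α * (m:ℝ)^α := by
        rw [ht, ← Real.mul_rpow (by positivity) (by positivity),
          div_mul_cancel₀ _ (ne_of_gt hmpos)]
      rw [htα]
      have hmul := mul_le_mul_of_nonneg_right (by linarith : t^α ≤ α*t + (1-α)) hmα.le
      have hts : t = (m':ℝ)/(m:ℝ) := ht
      have hexp : (α*t + (1-α)) * (m:ℝ)^α = α * (m:ℝ)^α * t + (1-α)*(m:ℝ)^α := by ring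
      have hgoal : α * (m:ℝ)^α * (((m:ℝ) - m')/(m:ℝ)) = α*(m:ℝ)^α*(1 - t) := by
        rw [hts]
        field_simp
      rw [hgoal]
      nlinarith [hmul]
    -- combine
    have hdelta : (m:ℝ)/(A*(m:ℝ)^α + 1) ≤ (m:ℝ) - m' := by linarith
    have hratio : (1:ℝ) ≤ (((m:ℝ) - m')/(m:ℝ)) * (A*(m:ℝ)^α + 1) := by
      rw [div_mul_eq_mul_div, le_div_iff₀ hmpos]
      have := mul_le_mul_of_nonneg_right hdelta hAm.le
      rw [div_mul_cancel₀ _ (ne_of_gt hAm)] at this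
      linarith
    have hmain : 1 ≤ (A/α)*((m:ℝ)^α - (m':ℝ)^α) + (Real.log m - Real.log m') := by
      have hAα : 0 < A/α := by positivity
      have h1 : (A/α) * (α * (m:ℝ)^α * (((m:ℝ) - m')/(m:ℝ))) ≤ (A/α)*((m:ℝ)^α - (m':ℝ)^α) :=
        mul_le_mul_of_nonneg_left hrpow hAα.le
      have h2 : (A/α) * (α * (m:ℝ)^α * (((m:ℝ) - m')/(m:ℝ)))
          = A * (m:ℝ)^α * (((m:ℝ) - m')/(m:ℝ)) := by
        field_simp
      have h3 : A * (m:ℝ)^α * (((m:ℝ) - m')/(m:ℝ)) + (((m:ℝ) - m')/(m:ℝ))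
          = (((m:ℝ) - m')/(m:ℝ)) * (A*(m:ℝ)^α + 1) := by ring
      nlinarith [hlog1, hratio]
    linarith

theorem stmt5 (d α : ℝ) (hd : 0 < d) (hα0 : 0 ≤ α) (hα1 : α ≤ 1) :
    ∃ C : ℝ, 0 < C ∧
      ∀ (ι : Type) [Fintype ι] (R : ι → Set (ℝ × ℝ)) (k : ℕ), 2 ≤ k →
        2 ≤ Fintype.card ι →
        (∀ V' : Finset ι,
          (((GkOn 0 R ↑V').edgeSet).ncard : ℝ) ≤ (d / 2) * (V'.card : ℝ) ^ (1 + α)) →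
        (α = 0 → ∃ φ : ι → ℕ, IsSCFRegions (k - 1) R φ ∧
          ((Finset.univ.image φ).card : ℝ) ≤ C * k * Real.log (Fintype.card ι)) ∧
        (0 < α → ∃ φ : ι → ℕ, IsSCFRegions (k - 1) R φ ∧
          ((Finset.univ.image φ).card : ℝ) ≤ C * k * (Fintype.card ι : ℝ) ^ α) := by
  classical
  refine ⟨(30*d+10) + (30*d+10)/α, ?_, ?_⟩
  · have h1 : (0:ℝ) < 30*d+10 := by linarith
    have h2 : (0:ℝ) ≤ (30*d+10)/α := div_nonneg h1.le hα0
    linarith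
  intro ι _ R k hk hn hH
  set K : ℕ := k - 1 with hKdef
  have hK : 1 ≤ K := by omega
  set A : ℝ := 2*((K:ℝ)+1)*(15*d+2) with hA
  have hApos : 0 < A := by positivity
  have hKk : (K:ℝ) + 1 = (k:ℝ) := by
    have h1 : K + 1 = k := by omega
    exact_mod_cast h1
  have hncard : (Finset.univ : Finset ι).card = Fintype.card ι := Finset.card_univ
  have hn1 : (1:ℝ) ≤ (Fintype.card ι : ℝ) := by
    have : 1 ≤ Fintype.card ι := by omega
    exact_mod_cast this
  have hn2r : (2:ℝ) ≤ (Fintype.card ι : ℝ) := by exact_mod_cast hn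
  have hk2r : (2:ℝ) ≤ (k:ℝ) := by exact_mod_cast hk
  have himgle : ∀ (φ : ι → ℕ) (L : ℕ), (∀ r ∈ (Finset.univ : Finset ι), φ r < L) →
      (Finset.univ.image φ).card ≤ L := by
    intro φ L hφ
    have hsub : Finset.univ.image φ ⊆ Finset.range L := by
      intro c hc
      obtain ⟨r, -, rfl⟩ := Finset.mem_image.1 hc
      exact Finset.mem_range.2 (hφ r (Finset.mem_univ r))
    calc (Finset.univ.image φ).card ≤ (Finset.range L).card := Finset.card_le_card hsub
      _ = L := Finset.card_range L
  constructor
  · -- α = 0 case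
    intro hα
    subst hα
    have hstep : ∀ m' m : ℕ, 0 < m → m' ≤ m →
        ((m':ℝ) ≤ (m:ℝ) - (m:ℝ)/(2*((K:ℝ)+1)*(15*d+2)*(m:ℝ)^(0:ℝ) + 1)) →
        F0fun A m' + 1 ≤ F0fun A m := by
      intro m' m h0 hle hcond
      rw [Real.rpow_zero, mul_one] at hcond
      exact F0_step A hApos h0 hle hcond
    obtain ⟨φ, L, hφlt, hLle, hcol⟩ := outer R d 0 hd hα0 hα1 hH hK (F0fun A)
      (by simp [F0fun]) hstep (Finset.univ : Finset ι).card Finset.univ le_rfl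
    refine ⟨φ, scf_main R φ hcol, ?_⟩
    have hL1 : (L:ℝ) ≤ (A+1)*Real.log (Fintype.card ι) + 1 := by
      rw [hncard] at hLle
      have hne : Fintype.card ι ≠ 0 := by omega
      rw [F0fun, if_neg hne] at hLle
      exact hLle
    have hlog2 : (0.6931471803 : ℝ) ≤ Real.log (Fintype.card ι) := by
      have h1 := Real.log_two_gt_d9
      have h2 : Real.log 2 ≤ Real.log (Fintype.card ι) :=
        Real.log_le_log (by norm_num) hn2r
      linarith
    have hcle : ((Finset.univ.image φ).card : ℝ) ≤ (L:ℝ) := by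
      exact_mod_cast himgle φ L hφlt
    have hprod : (1:ℝ) ≤ (k:ℝ) * Real.log (Fintype.card ι) := by
      have := mul_le_mul hk2r hlog2 (by norm_num) (by linarith)
      linarith
    have hAk : A + 1 ≤ (30*d+5)*(k:ℝ) := by
      rw [hA, hKk]
      nlinarith [hd.le, hk2r]
    have hC0 : (30*d+10) + (30*d+10)/(0:ℝ) = 30*d+10 := by
      rw [div_zero, add_zero]
    rw [hC0]
    have hlogn : 0 ≤ Real.log (Fintype.card ι) := by linarith
    calc ((Finset.univ.image φ).card : ℝ) ≤ (L:ℝ) := hcle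
      _ ≤ (A+1)*Real.log (Fintype.card ι) + 1 := hL1
      _ ≤ (30*d+5)*(k:ℝ)*Real.log (Fintype.card ι) + 1 := by
          have := mul_le_mul_of_nonneg_right hAk hlogn
          linarith
      _ ≤ (30*d+5)*(k:ℝ)*Real.log (Fintype.card ι) + 5*((k:ℝ)*Real.log (Fintype.card ι)) := by
          linarith
      _ = (30*d+10)*(k:ℝ)*Real.log (Fintype.card ι) := by ring
  · -- α > 0 case
    intro hα
    have hstep : ∀ m' m : ℕ, 0 < m → m' ≤ m →
        ((m':ℝ) ≤ (m:ℝ) - (m:ℝ)/(2*((K:ℝ)+1)*(15*d+2)*(m:ℝ)^α + 1)) →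
        F1fun A α m' + 1 ≤ F1fun A α m := by
      intro m' m h0 hle hcond
      exact F1_step A α hApos hα hα1 h0 hle hcond
    obtain ⟨φ, L, hφlt, hLle, hcol⟩ := outer R d α hd hα0 hα1 hH hK (F1fun A α)
      (by simp [F1fun]) hstep (Finset.univ : Finset ι).card Finset.univ le_rfl
    refine ⟨φ, scf_main R φ hcol, ?_⟩
    set nn : ℝ := (Fintype.card ι : ℝ) with hnn
    have hnnpos : (0:ℝ) < nn := by rw [hnn]; linarith
    have hnα1 : (1:ℝ) ≤ nn^α := by
      calc (1:ℝ) = (1:ℝ)^α := (Real.one_rpow α).symm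
        _ ≤ nn^α := Real.rpow_le_rpow (by norm_num) hn1 hα0
    have hnαpos : (0:ℝ) < nn^α := by linarith
    have hL1 : (L:ℝ) ≤ (A/α)*nn^α + Real.log nn + 1 := by
      rw [hncard] at hLle
      have hne : Fintype.card ι ≠ 0 := by omega
      rw [F1fun, if_neg hne] at hLle
      exact hLle
    have hlog : Real.log nn ≤ nn^α/α := by
      have h1 : Real.log (nn^α) = α * Real.log nn := Real.log_rpow hnnpos α
      have h2 : Real.log (nn^α) ≤ nn^α - 1 := Real.log_le_sub_one_of_pos hnαpos
      rw [h1] at h2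
      rw [le_div_iff₀ hα]
      nlinarith
    have h1α : (1:ℝ) ≤ nn^α/α := by
      rw [le_div_iff₀ hα]
      nlinarith
    have hcle : ((Finset.univ.image φ).card : ℝ) ≤ (L:ℝ) := by
      exact_mod_cast himgle φ L hφlt
    have hAk2 : A + 2 ≤ (30*d+10)*(k:ℝ) := by
      rw [hA, hKk]
      nlinarith [hd.le, hk2r]
    calc ((Finset.univ.image φ).card : ℝ) ≤ (L:ℝ) := hcle
      _ ≤ (A/α)*nn^α + Real.log nn + 1 := hL1
      _ ≤ (A/α)*nn^α + nn^α/α + nn^α/α := by linarith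
      _ = ((A+2)/α)*nn^α := by field_simp; ring
      _ ≤ (((30*d+10)*(k:ℝ))/α)*nn^α := by
          refine mul_le_mul_of_nonneg_right ?_ hnαpos.le
          gcongr
      _ = ((30*d+10)/α)*(k:ℝ)*nn^α := by ring
      _ ≤ ((30*d+10) + (30*d+10)/α)*(k:ℝ)*nn^α := by
          have h1 : (0:ℝ) < 30*d+10 := by linarith
          have h2 : (0:ℝ) ≤ (k:ℝ)*nn^α := by positivity
          nlinarith [h2, h1]
end
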